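/- arXiv:2512.01385 — 5 statements merged into one kernel-verified Lean document; each statement's English description precedes it below -/
import Mathlib

section
/- Let p > 3 be a prime and let d be a nonzero rational number that is a p-adic unit. Then ∑_{k=0}^{p−1} (1 + ((27−4d)/6)k² + ((27+2d)/6)k) · C(3k,k)/d^k ≡ (−27/d)^{p−1} p((2p−1)(1 − 3p·q_p(3)) − 6p² q_p(3)²) (mod p⁴), where the congruence means the difference divided by p⁴ is a p-adic integer. -/
open Nat Finset

lemma choose_key (n : ℕ) :
    2 * (n+1) * (2*n+1) * ((3*n+3).choose (n+1)) = 3 * (3*n+1) * (3*n+2) * ((3*n).choose n) := by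
  have h1 : (3*n).choose n * (n ! * (2*n)!) = (3*n)! := by
    have := Nat.choose_mul_factorial_mul_factorial (show n ≤ 3*n by omega)
    have e : 3*n - n = 2*n := by omega
    rw [e] at this; linarith [this]
  have h2 : (3*n+3).choose (n+1) * ((n+1)! * (2*n+2)!) = (3*n+3)! := by
    have := Nat.choose_mul_factorial_mul_factorial (show n+1 ≤ 3*n+3 by omega)
    have e : 3*n+3 - (n+1) = 2*n+2 := by omega
    rw [e] at this; linarith [this]
  have hfQ : ((3*n+3).choose (n+1) : ℚ) * ((n+1)! * (2*n+2)!) = (3*n+3)! := by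
    exact_mod_cast congrArg (Nat.cast : ℕ → ℚ) h2
  have hfQ1 : ((3*n).choose n : ℚ) * (n ! * (2*n)!) = (3*n)! := by
    exact_mod_cast congrArg (Nat.cast : ℕ → ℚ) h1
  have e1 : ((3*n+3)! : ℚ) = (3*(n:ℚ)+3) * ((3*(n:ℚ)+2) * ((3*(n:ℚ)+1) * (3*n)!)) := by
    rw [show 3*n+3 = (3*n+2)+1 by ring, Nat.factorial_succ]
    rw [show 3*n+2 = (3*n+1)+1 by ring, Nat.factorial_succ]
    rw [show 3*n+1 = (3*n)+1 by ring, Nat.factorial_succ]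
    push_cast; ring
  have e2 : ((n+1)! : ℚ) = ((n:ℚ)+1) * n ! := by rw [Nat.factorial_succ]; push_cast; ring
  have e3 : ((2*n+2)! : ℚ) = (2*(n:ℚ)+2) * ((2*(n:ℚ)+1) * (2*n)!) := by
    rw [show 2*n+2 = (2*n+1)+1 by ring, Nat.factorial_succ]
    rw [show 2*n+1 = (2*n)+1 by ring, Nat.factorial_succ]
    push_cast; ring
  rw [e1, e2, e3] at hfQ
  have hQ : (2 * ((n:ℚ)+1) * (2*(n:ℚ)+1) * ((3*n+3).choose (n+1)) : ℚ)
      = 3 * (3*(n:ℚ)+1) * (3*(n:ℚ)+2) * ((3*n).choose n) := by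
    have hn : (n ! : ℚ) ≠ 0 := by exact_mod_cast (Nat.factorial_pos n).ne'
    have h2n : ((2*n)! : ℚ) ≠ 0 := by exact_mod_cast (Nat.factorial_pos (2*n)).ne'
    have hn1 : ((n:ℚ)+1) ≠ 0 := by positivity
    have key : (2 * ((n:ℚ)+1) * (2*(n:ℚ)+1) * ((3*n+3).choose (n+1)))
        * (((n:ℚ)+1) * ((n !) * ((2*n)!)))
        = (3 * (3*(n:ℚ)+1) * (3*(n:ℚ)+2) * ((3*n).choose n))
        * (((n:ℚ)+1) * ((n !) * ((2*n)!))) := by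
      linear_combination hfQ - 3*((n:ℚ)+1)*(3*(n:ℚ)+2)*(3*(n:ℚ)+1)*hfQ1
    exact mul_right_cancel₀ (by positivity) key
  exact_mod_cast hQ

lemma sum_eq {K : Type*} [Field K] [CharZero K] (d : K) (hd : d ≠ 0) (n : ℕ) :
    ∑ k ∈ Finset.range n,
      (1 + ((27 - 4*d)/6) * (k:K)^2 + ((27 + 2*d)/6) * (k:K)) * (((3*k).choose k : ℕ) : K) / d^k
    = (n:K) * (2*(n:K)-1) * (((3*n).choose n : ℕ) : K) * d / (3 * d^n) := by
  induction n with
  | zero => simp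
  | succ n ih =>
    rw [Finset.sum_range_succ, ih]
    have hdn : d^n ≠ 0 := pow_ne_zero _ hd
    have key : (2*((n:K)+1)*(2*(n:K)+1)) * (((3*(n+1)).choose (n+1) : ℕ) : K)
        = (3*(3*(n:K)+1)*(3*(n:K)+2)) * (((3*n).choose n : ℕ) : K) := by
      have := choose_key n
      have h2 : 3*(n+1) = 3*n+3 := by ring
      rw [h2]
      exact_mod_cast congrArg (Nat.cast : ℕ → K) this
    field_simp
    push_cast
    ring_nf
    ring_nf at key
    linear_combination (-3*d*d^n) * key

-- pairing lemma
@[to_additive]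
lemma prod_pair {M : Type*} [CommMonoid M] (m : ℕ) (f : ℕ → M) :
    ∏ j ∈ Finset.Ico 1 (2*m+1), f j = ∏ j ∈ Finset.Ico 1 (m+1), (f j * f (2*m+1-j)) := by
  rw [Finset.prod_mul_distrib]
  rw [← Finset.prod_Ico_consecutive f (show 1 ≤ m+1 by omega) (show m+1 ≤ 2*m+1 by omega)]
  congr 1
  apply Finset.prod_nbij' (fun i => 2*m+1-i) (fun i => 2*m+1-i)
  · intro a ha; simp only [Finset.mem_Ico] at *; omega
  · intro a ha; simp only [Finset.mem_Ico] at *; omega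
  · intro a ha; simp only [Finset.mem_Ico] at ha; omega
  · intro a ha; simp only [Finset.mem_Ico] at ha; omega
  · intro a ha
    have : 2*m+1-(2*m+1-a) = a := by simp only [Finset.mem_Ico] at ha; omega
    rw [this]

lemma prod_shift_factorial (n : ℕ) : ∀ k : ℕ, (∏ j ∈ Finset.Ico 1 (k+1), (n+j)) * n ! = (n+k)! := by
  intro k
  induction k with
  | zero => simp
  | succ k ih =>
    rw [Finset.prod_Ico_succ_top (by omega)]
    rw [show n+(k+1) = (n+k)+1 by ring, Nat.factorial_succ, ← ih]
    ring

-- expansion lemma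
lemma prod_add_c {R : Type*} [CommRing R] (c : R) (hc : c * c = 0) (s : Finset ℕ) (u : ℕ → R) :
    ∏ j ∈ s, (u j + c) = (∏ j ∈ s, u j) + c * ∑ j ∈ s, ∏ i ∈ s.erase j, u i := by
  induction s using Finset.induction_on with
  | empty => simp
  | @insert a s ha ih =>
    rw [Finset.prod_insert ha, Finset.prod_insert ha, ih, Finset.sum_insert ha,
      Finset.erase_insert ha]
    have h : ∀ j ∈ s, ∏ i ∈ (insert a s).erase j, u i = u a * ∏ i ∈ s.erase j, u i := by
      intro j hj
      have hne : j ≠ a := by rintro rfl; exact ha hj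
      rw [Finset.erase_insert_of_ne hne.symm, Finset.prod_insert (fun h => ha (Finset.mem_of_mem_erase h))]
    rw [Finset.sum_congr rfl h, ← Finset.mul_sum]
    linear_combination (∑ j ∈ s, ∏ i ∈ s.erase j, u i) * hc

-- the half sum of inverse squares mod p
lemma half_sum_inv_sq (p : ℕ) [Fact p.Prime] (hp : 3 < p) (m : ℕ) (hm : p = 2*m+1) :
    ∑ j ∈ Finset.Ico 1 (m+1), (((j : ZMod p))^2)⁻¹ = 0 := by
  haveI : NeZero p := ⟨(Fact.out : p.Prime).ne_zero⟩
  set g : ℕ → ZMod p := fun j => (((j : ZMod p))^2)⁻¹ with hg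
  have hrefl : ∀ j ∈ Finset.Ico 1 (m+1), g (2*m+1-j) = g j := by
    intro j hj
    simp only [Finset.mem_Ico] at hj
    have h1 : ((2*m+1-j : ℕ) : ZMod p) = -(j : ZMod p) := by
      have hle : j ≤ 2*m+1 := by omega
      have hc : (2*(m : ZMod p)+1) = 0 := by
        have h : ((2*m+1 : ℕ) : ZMod p) = 0 := by rw [← hm]; exact ZMod.natCast_self p
        push_cast at h; exact h
      push_cast [Nat.cast_sub hle]
      linear_combination hc
    simp only [hg, h1, neg_sq]
  have hfull : ∑ j ∈ Finset.Ico 1 (2*m+1), g j = 2 * ∑ j ∈ Finset.Ico 1 (m+1), g j := by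
    rw [sum_pair m g, Finset.mul_sum]
    refine Finset.sum_congr rfl fun j hj => ?_
    rw [hrefl j hj]; ring
  have hzero : ∑ j ∈ Finset.Ico 1 (2*m+1), g j = 0 := by
    have h0 : ∑ j ∈ Finset.range p, g j = ∑ j ∈ Finset.Ico 1 (2*m+1), g j := by
      rw [Finset.range_eq_Ico, ← hm]
      rw [← Finset.sum_Ico_consecutive g (show 0 ≤ 1 by omega) (show 1 ≤ p by omega)]
      have : ∑ j ∈ Finset.Ico 0 1, g j = 0 := by simp [hg]
      rw [this, zero_add]
    have h1 : ∑ j ∈ Finset.range p, g j = ∑ x : ZMod p, (x^2)⁻¹ := by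
      refine Finset.sum_nbij' (fun j => ((j : ZMod p))) (fun x => x.val)
        (fun a _ => Finset.mem_univ _)
        (fun a _ => Finset.mem_range.mpr (ZMod.val_lt a))
        (fun a ha => ZMod.val_cast_of_lt (Finset.mem_range.mp ha))
        (fun a _ => ZMod.natCast_zmod_val a)
        (fun a _ => rfl)
    have h2 : ∑ x : ZMod p, (x^2)⁻¹ = 0 := by
      have e1 : ∑ x : ZMod p, (x^2)⁻¹ = ∑ x : ZMod p, (x⁻¹)^2 := by
        refine Finset.sum_congr rfl fun x _ => (inv_pow x 2).symm
      rw [e1]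
      have e2 : ∑ x : ZMod p, (x⁻¹)^2 = ∑ x : ZMod p, x^2 :=
        Fintype.sum_equiv (Equiv.inv (ZMod p)) _ _ (fun x => rfl)
      rw [e2]
      have hcard : 2 < Fintype.card (ZMod p) - 1 := by rw [ZMod.card]; omega
      exact FiniteField.sum_pow_lt_card_sub_one (ZMod p) 2 hcard
    rw [← h0, h1, h2]
  have h2ne : (2 : ZMod p) ≠ 0 := by
    have hnd : ¬ (p ∣ 2) := fun h => by have := Nat.le_of_dvd (by norm_num) h; omega
    have : ((2:ℕ) : ZMod p) ≠ 0 := by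
      rw [Ne, ZMod.natCast_eq_zero_iff]; exact hnd
    simpa using this
  rw [hfull] at hzero
  exact (mul_eq_zero.mp hzero).resolve_left h2ne

lemma jacobsthal (p : ℕ) [Fact p.Prime] (hp : 3 < p) :
    (p:ℤ)^3 ∣ ((3*p-1).choose (p-1) : ℤ) - 1 := by
  haveI : NeZero p := ⟨(Fact.out : p.Prime).ne_zero⟩
  haveI : NeZero (p^3) := ⟨pow_ne_zero 3 (Fact.out : p.Prime).ne_zero⟩
  obtain ⟨m, hm⟩ : ∃ m, p = 2*m+1 := by
    have : Odd p := (Fact.out : p.Prime).odd_of_ne_two (by omega)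
    obtain ⟨m, hmm⟩ := this; exact ⟨m, by omega⟩
  set N := (3*p-1).choose (p-1) with hN
  -- Step 1 : N * (p-1)! = ∏ j in Ico 1 p, (2p + j)  (in ℕ)
  have hA : N * (p-1)! = ∏ j ∈ Finset.Ico 1 p, (2*p + j) := by
    have h2 := prod_shift_factorial (2*p) (p-1)
    have e1 : (p-1)+1 = p := by omega
    have e2 : 2*p+(p-1) = 3*p-1 := by omega
    rw [e1, e2] at h2
    have h3 := Nat.choose_mul_factorial_mul_factorial (show p-1 ≤ 3*p-1 by omega)
    have e3 : 3*p-1-(p-1) = 2*p := by omega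
    rw [e3] at h3
    apply Nat.eq_of_mul_eq_mul_right (Nat.factorial_pos (2*p))
    rw [mul_assoc] at h3 ⊢
    rw [h3, ← hN] at *
    rw [h2]
  -- pairing at the natural number level
  have hpairN : ∏ j ∈ Finset.Ico 1 p, (2*p + j)
      = ∏ j ∈ Finset.Ico 1 (m+1), (j*(p-j) + 6*p*p) := by
    rw [hm, prod_pair m (fun j => (2*(2*m+1) + j))]
    refine Finset.prod_congr rfl fun j hj => ?_
    simp only [Finset.mem_Ico] at hj
    obtain ⟨t, ht⟩ : ∃ t, 2*m+1 = j + t := ⟨2*m+1 - j, by omega⟩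
    have e2 : 2*m+1-j = t := by omega
    rw [e2, ht]; ring
  -- cast to ZMod (p^3)
  set R := ZMod (p^3) with hR
  have hAR : (N : R) * ((p-1)! : R)
      = ∏ j ∈ Finset.Ico 1 (m+1), (((j*(p-j) : ℕ) : R) + ((6*p*p : ℕ) : R)) := by
    have h0 := congrArg (Nat.cast : ℕ → R) (hA.trans hpairN)
    rw [Nat.cast_mul, Nat.cast_prod] at h0
    rw [h0]
    exact Finset.prod_congr rfl (fun j _ => Nat.cast_add _ _)
  -- c² = 0
  have hc : ((6*p*p : ℕ) : R) * ((6*p*p : ℕ) : R) = 0 := by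
    have hp3 : ((p : R))^3 = 0 := by
      rw [show ((p:R)) = ((p:ℕ) : R) from rfl, ← Nat.cast_pow, ZMod.natCast_self]
    push_cast
    linear_combination (36 * (p:R)) * hp3
  rw [prod_add_c _ hc] at hAR
  -- the sum term vanishes
  have hX : ((6*p*p : ℕ) : R) * (∑ j ∈ Finset.Ico 1 (m+1), ∏ i ∈ (Finset.Ico 1 (m+1)).erase j,
      ((i*(p-i) : ℕ) : R)) = 0 := by
    -- Xn as a natural number
    set Xn : ℕ := ∑ j ∈ Finset.Ico 1 (m+1), ∏ i ∈ (Finset.Ico 1 (m+1)).erase j, (i*(p-i)) with hXn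
    have hcast : (∑ j ∈ Finset.Ico 1 (m+1), ∏ i ∈ (Finset.Ico 1 (m+1)).erase j,
        ((i*(p-i) : ℕ) : R)) = ((Xn : ℕ) : R) := by rw [hXn, Nat.cast_sum]; exact Finset.sum_congr rfl fun j _ => (Nat.cast_prod _ _).symm
    -- p ∣ Xn
    have hdvd : p ∣ Xn := by
      rw [← ZMod.natCast_eq_zero_iff]
      push_cast [hXn]
      -- now work in ZMod p
      have hv : ∀ j ∈ Finset.Ico 1 (m+1), ∏ i ∈ (Finset.Ico 1 (m+1)).erase j,
          ((i : ZMod p)*((p-i : ℕ) : ZMod p))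
          = (∏ i ∈ Finset.Ico 1 (m+1), (-((i : ZMod p))^2)) * (-((j : ZMod p))^2)⁻¹ := by
        intro j hj
        have hval : ∀ i ∈ Finset.Ico 1 (m+1), ((i : ZMod p))*((p-i : ℕ) : ZMod p) = -((i : ZMod p))^2 := by
          intro i hi
          simp only [Finset.mem_Ico] at hi
          have : ((p-i : ℕ) : ZMod p) = -(i : ZMod p) := by
            rw [Nat.cast_sub (by omega), ZMod.natCast_self]; ring
          rw [this]; ring
        rw [Finset.prod_congr rfl (fun i hi => hval i (Finset.mem_of_mem_erase hi))]
        have hjne : (-((j : ZMod p))^2) ≠ 0 := by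
          simp only [Finset.mem_Ico] at hj
          have hj0 : ((j : ZMod p)) ≠ 0 := by
            rw [Ne, ZMod.natCast_eq_zero_iff]
            intro h; have := Nat.le_of_dvd (by omega) h; omega
          intro h
          exact hj0 (pow_eq_zero_iff (by norm_num) |>.mp (neg_eq_zero.mp h))
        rw [eq_mul_inv_iff_mul_eq₀ hjne]
        exact Finset.prod_erase_mul _ _ hj
      rw [Finset.sum_congr rfl hv, ← Finset.mul_sum]
      have : ∑ j ∈ Finset.Ico 1 (m+1), (-((j : ZMod p))^2)⁻¹ = 0 := by
        have e : ∀ j ∈ Finset.Ico 1 (m+1), (-((j : ZMod p))^2)⁻¹ = -(((j : ZMod p))^2)⁻¹ := by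
          intro j _; rw [inv_neg]
        rw [Finset.sum_congr rfl e, Finset.sum_neg_distrib]
        rw [half_sum_inv_sq p hp m hm]; ring
      rw [this, mul_zero]
    obtain ⟨Y, hY⟩ := hdvd
    rw [hcast, hY]
    have : (6*p*p) * (p*Y) = (p^3) * (6*Y) := by ring
    rw [← Nat.cast_mul (α := R), this, Nat.cast_mul, ZMod.natCast_self, zero_mul]
  rw [hX, add_zero] at hAR
  -- ∏ u = (p-1)!
  have hF : ∏ j ∈ Finset.Ico 1 (m+1), ((j*(p-j) : ℕ) : R) = ((p-1)! : R) := by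
    rw [← Nat.cast_prod]
    congr 1
    have h1 : ∏ j ∈ Finset.Ico 1 p, j = (p-1)! := by
      have := Finset.prod_Ico_id_eq_factorial (p-1)
      rwa [show p-1+1 = p by omega] at this
    rw [← h1, hm, prod_pair m (fun j => j)]
  rw [hF] at hAR
  -- (p-1)! is a unit
  have hunit : IsUnit (((p-1)! : ℕ) : R) := by
    rw [ZMod.isUnit_iff_coprime]
    apply Nat.Coprime.pow_right
    rw [Nat.coprime_comm]
    apply (Nat.Prime.coprime_iff_not_dvd (Fact.out : p.Prime)).mpr
    rw [Nat.Prime.dvd_factorial (Fact.out : p.Prime)]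
    omega
  have hN1 : (N : R) = 1 := by
    obtain ⟨v, hv⟩ := hunit
    have := hAR
    calc (N : R) = (N : R) * ((p-1)! : R) * (v.inv : R) := by
          rw [← hv]; simp [mul_assoc, ← Units.val_mul]
      _ = ((p-1)! : R) * (v.inv : R) := by rw [this]
      _ = 1 := by rw [← hv]; simp [← Units.val_mul]
  have : (((N : ℤ) - 1 : ℤ) : R) = 0 := by push_cast [hN1]; ring
  have hdvd := (ZMod.intCast_zmod_eq_zero_iff_dvd _ _).mp this
  push_cast at hdvd
  exact_mod_cast hdvd


/-- Fermat quotient `q_p(a) = (a^(p-1) - 1)/p` as a rational number. -/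
def fermatQuotient (p a : ℕ) : ℚ := ((a : ℚ) ^ (p - 1) - 1) / (p : ℚ)






theorem stmt2 (p : ℕ) [Fact p.Prime] (hp : 3 < p)
    (d : ℚ) (hd0 : d ≠ 0) (hdu : ‖(d : ℚ_[p])‖ = 1) :
    ‖((∑ k ∈ Finset.range p,
        (1 + ((27 - 4 * (d : ℚ_[p])) / 6) * (k : ℚ_[p]) ^ 2
            + ((27 + 2 * (d : ℚ_[p])) / 6) * (k : ℚ_[p])) *
          (((3 * k).choose k : ℕ) : ℚ_[p]) / (d : ℚ_[p]) ^ k) -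
      ((-27 / d : ℚ) : ℚ_[p]) ^ (p - 1) * (p : ℚ_[p]) *
        ((2 * (p : ℚ_[p]) - 1) * (1 - 3 * (p : ℚ_[p]) * (fermatQuotient p 3 : ℚ_[p]))
          - 6 * (p : ℚ_[p]) ^ 2 * (fermatQuotient p 3 : ℚ_[p]) ^ 2)) / (p : ℚ_[p]) ^ 4‖ ≤ 1 := by
  have hprime : p.Prime := Fact.out
  have hp0 : 0 < p := by omega
  set D : ℚ_[p] := (d : ℚ_[p]) with hDdef
  have hD : D ≠ 0 := by
    rw [hDdef]; exact_mod_cast hd0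
  have hP : ((p : ℚ_[p])) ≠ 0 := by
    exact_mod_cast Nat.cast_ne_zero.mpr (by omega)
  -- Fermat quotient as a natural number
  have hfermat : p ∣ 3^(p-1) - 1 := by
    have h3ne : (((3:ℕ)) : ZMod p) ≠ 0 := by
      rw [Ne, ZMod.natCast_eq_zero_iff]
      intro h; have := Nat.le_of_dvd (by norm_num) h; omega
    have hpow := ZMod.pow_card_sub_one_eq_one h3ne
    rw [← ZMod.natCast_eq_zero_iff]
    have h1 : (1:ℕ) ≤ 3^(p-1) := Nat.one_le_pow _ _ (by norm_num)
    push_cast [Nat.cast_sub h1]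
    rw [show ((3:ℕ):ZMod p) = (3 : ZMod p) by push_cast; rfl] at hpow
    rw [hpow]; ring
  set Q : ℕ := (3^(p-1) - 1)/p with hQdef
  have hQ : 3^(p-1) = p*Q + 1 := by
    have h1 : p * Q = 3^(p-1) - 1 := Nat.mul_div_cancel' hfermat
    have h2 : (1:ℕ) ≤ 3^(p-1) := Nat.one_le_pow _ _ (by norm_num)
    omega
  have hq : ((fermatQuotient p 3 : ℚ) : ℚ_[p]) = ((Q:ℕ) : ℚ_[p]) := by
    have hfq : fermatQuotient p 3 = (Q : ℚ) := by
      unfold fermatQuotient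
      have h3 : (((3:ℕ)):ℚ)^(p-1) = ((3^(p-1) : ℕ) : ℚ) := by push_cast; ring
      rw [h3, hQ]
      have hp0' : ((p:ℚ)) ≠ 0 := Nat.cast_ne_zero.mpr (by omega)
      push_cast
      field_simp
      ring
    rw [hfq]; push_cast; ring
  -- Jacobsthal
  set N : ℕ := (3*p-1).choose (p-1) with hNdef
  obtain ⟨J, hJ⟩ := jacobsthal p hp
  -- C(3p,p) = 3N
  have hNchoose : (3*p).choose p = 3 * N := by
    have h := Nat.add_one_mul_choose_eq (3*p-1) (p-1)
    rw [show p-1+1 = p by omega, show 3*p-1+1 = 3*p by omega] at h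
    have h' : (3*N)*p = ((3*p).choose p)*p := by rw [hNdef, ← h]; ring
    exact (Nat.eq_of_mul_eq_mul_right hp0 h').symm
  -- the integer identity
  set K : ℤ := (2*(p:ℤ)-1)*J + (12*(Q:ℤ)^2+10*Q^3+16*p*Q^3+15*p*Q^4+6*p^2*Q^4+6*p^2*Q^5) with hKdef
  have hM : (2*(p:ℤ)-1) * (N:ℤ) - (1+(p:ℤ)*(Q:ℤ))^3 * ((2*(p:ℤ)-1)*(1-3*(p:ℤ)*(Q:ℤ)) - 6*(p:ℤ)^2*(Q:ℤ)^2)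
      = (p:ℤ)^3 * K := by
    rw [hKdef]
    linear_combination (2*(p:ℤ)-1) * hJ
  -- cast of the integer identity to ℚ_[p]
  have hMQ : (2*(p:ℚ_[p])-1) * (N:ℚ_[p]) - (1+(p:ℚ_[p])*(Q:ℚ_[p]))^3 *
      ((2*(p:ℚ_[p])-1)*(1-3*(p:ℚ_[p])*(Q:ℚ_[p])) - 6*(p:ℚ_[p])^2*(Q:ℚ_[p])^2)
      = (p:ℚ_[p])^3 * ((K:ℤ) : ℚ_[p]) := by exact_mod_cast congrArg (Int.cast : ℤ → ℚ_[p]) hM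
  -- rewrite the sum
  rw [sum_eq D hD p]
  -- rewrite choose
  have hC : (((3*p).choose p : ℕ) : ℚ_[p]) = 3 * ((N:ℕ) : ℚ_[p]) := by
    rw [hNchoose]; push_cast; ring
  rw [hC, hq]
  -- the (-27/d) power
  have h27 : ((-27 / d : ℚ) : ℚ_[p]) = -(27 / D) := by rw [hDdef]; push_cast; ring
  have hEven : Even (p-1) := by
    have : Odd p := hprime.odd_of_ne_two (by omega)
    obtain ⟨t, ht⟩ := this
    exact ⟨t, by omega⟩
  have h27pow : ((-27 / d : ℚ) : ℚ_[p]) ^ (p-1) = ((p*Q+1 : ℕ) : ℚ_[p])^3 / D^(p-1) := by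
    rw [h27, hEven.neg_pow, div_pow, ← hQ]
    congr 1
    rw [show ((27:ℚ_[p])) = ((3:ℚ_[p]))^3 by norm_num, ← pow_mul, mul_comm 3 (p-1), pow_mul]
    push_cast
    ring
  rw [h27pow]
  -- now a pure field computation
  have hDp1 : D^(p-1) * D = D^p := by
    rw [← pow_succ]; congr 1; omega
  have hDpow : D^p ≠ 0 := pow_ne_zero _ hD
  have hDpow1 : D^(p-1) ≠ 0 := pow_ne_zero _ hD
  have key : ((p:ℚ_[p]) * (2*(p:ℚ_[p])-1) * (3 * ((N:ℕ) : ℚ_[p])) * D / (3 * D^p) -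
      ((p*Q+1 : ℕ) : ℚ_[p])^3 / D^(p-1) * (p:ℚ_[p]) *
        ((2 * (p : ℚ_[p]) - 1) * (1 - 3 * (p : ℚ_[p]) * ((Q:ℕ) : ℚ_[p]))
          - 6 * (p : ℚ_[p]) ^ 2 * ((Q:ℕ) : ℚ_[p]) ^ 2)) / (p : ℚ_[p]) ^ 4
      = D * (D^p)⁻¹ * ((K:ℤ) : ℚ_[p]) := by
    rw [← hDp1]
    field_simp [hD, hP, hDpow1]
    push_cast
    linear_combination hMQ
  rw [key]
  rw [norm_mul, norm_mul, norm_inv, norm_pow]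
  rw [show ‖D‖ = 1 from hdu]
  simp only [one_pow, inv_one, one_mul]
  exact Padic.norm_int_le_one _
end

section
/- Let p ≥ 3 be a prime, let d be a nonzero rational number that is a p-adic unit, let x be a p-adic integer with ⟨x⟩_p > (p−1)/2, and set m := (x − ⟨x⟩_p)/p ∈ ℤ_p. Then ∑_{k=0}^{(p−1)/2} (x² + x − (1+4d)k² − (1−2d)k) · d^{−k} · C(x,k)C(x+k,k)/C(2k,k) ≡ ((1+m)p / d^{(p−1)/2}) · C(⟨x⟩_p + (p+1)/2, p+1) (mod p²), where the congruence means the difference divided by p² is a p-adic integer. -/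
/-- Generalized binomial coefficient `C(x, k) = x(x-1)⋯(x-k+1)/k!` in `ℚ_[p]`. -/
noncomputable def gbinom (p : ℕ) [Fact p.Prime] (x : ℚ_[p]) (k : ℕ) : ℚ_[p] :=
  (∏ i ∈ Finset.range k, (x - (i : ℚ_[p]))) / (k.factorial : ℚ_[p])

section Aux

lemma prod_sub_prod_dvd {R : Type*} [CommRing R] (q : R) (s : Finset ℕ) (f g : ℕ → R)
    (h : ∀ i ∈ s, q ∣ f i - g i) : q ∣ (∏ i ∈ s, f i) - ∏ i ∈ s, g i := by
  classical
  induction s using Finset.induction_on with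
  | empty => simp
  | @insert a s hna ih =>
      rw [Finset.prod_insert hna, Finset.prod_insert hna]
      have h1 : q ∣ f a - g a := h a (Finset.mem_insert_self a s)
      have h2 : q ∣ (∏ i ∈ s, f i) - ∏ i ∈ s, g i := ih fun i hi => h i (Finset.mem_insert_of_mem hi)
      have he : f a * ∏ i ∈ s, f i - g a * ∏ i ∈ s, g i
          = f a * ((∏ i ∈ s, f i) - ∏ i ∈ s, g i) + (f a - g a) * ∏ i ∈ s, g i := by ring
      rw [he]
      exact dvd_add (Dvd.dvd.mul_left h2 _) (Dvd.dvd.mul_right h1 _)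

variable (p : ℕ) [Fact p.Prime]

lemma norm_nat_unit (N : ℕ) (h : ¬ p ∣ N) : ‖(N : ℚ_[p])‖ = 1 := by
  refine le_antisymm (by exact_mod_cast Padic.norm_int_le_one (N : ℤ)) ?_
  by_contra hlt
  push_neg at hlt
  have h2 : ‖((N : ℤ) : ℚ_[p])‖ < 1 := by push_cast; linarith
  rw [Padic.norm_intCast_lt_one_iff] at h2
  exact h (by exact_mod_cast h2)

lemma fact_ne (k : ℕ) : ((k.factorial : ℚ_[p])) ≠ 0 :=
  Nat.cast_ne_zero.mpr (Nat.factorial_ne_zero k)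

lemma gbinom_step (y : ℚ_[p]) (j : ℕ) :
    ((j : ℚ_[p]) + 2) * ((j : ℚ_[p]) + 1) * gbinom p y (j + 2)
      = y * (y - ((j : ℚ_[p]) + 1)) * gbinom p (y - 1) j := by
  have hprod : (∏ i ∈ Finset.range (j + 2), (y - (i : ℚ_[p])))
      = y * (y - ((j : ℚ_[p]) + 1)) * ∏ i ∈ Finset.range j, (y - 1 - (i : ℚ_[p])) := by
    rw [Finset.prod_range_succ, Finset.prod_range_succ']
    rw [Finset.prod_congr rfl
      (fun i _ => by push_cast; ring :
        ∀ i ∈ Finset.range j, (y - ((i + 1 : ℕ) : ℚ_[p])) = (y - 1 - (i : ℚ_[p])))]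
    push_cast
    ring
  have hfac : ((j + 2).factorial : ℚ_[p]) = ((j:ℚ_[p]) + 2) * ((j:ℚ_[p]) + 1) * (j.factorial : ℚ_[p]) := by
    rw [show j + 2 = (j+1)+1 from rfl, Nat.factorial_succ, Nat.factorial_succ]
    push_cast; ring
  have h1 : ((j:ℚ_[p]) + 2) ≠ 0 := by
    have h := Nat.cast_ne_zero (R := ℚ_[p]).mpr (show j + 2 ≠ 0 by omega)
    push_cast at h; exact h
  have h2 : ((j:ℚ_[p]) + 1) ≠ 0 := Nat.cast_add_one_ne_zero j
  unfold gbinom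
  rw [hprod, hfac, mul_div_assoc', mul_div_assoc',
    div_eq_div_iff (by exact mul_ne_zero (mul_ne_zero h1 h2) (fact_ne p j)) (fact_ne p j)]
  ring

lemma gbinom_mul (x : ℚ_[p]) (k : ℕ) :
    gbinom p x k * gbinom p (x + (k : ℚ_[p])) k / (((2 * k).choose k : ℕ) : ℚ_[p])
      = gbinom p (x + (k : ℚ_[p])) (2 * k) := by
  have hprod : (∏ i ∈ Finset.range (2 * k), (x + (k:ℚ_[p]) - (i : ℚ_[p])))
      = (∏ i ∈ Finset.range k, (x + (k:ℚ_[p]) - (i : ℚ_[p]))) * ∏ i ∈ Finset.range k, (x - (i : ℚ_[p])) := by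
    rw [two_mul, Finset.prod_range_add]
    congr 1
    exact Finset.prod_congr rfl fun i _ => by push_cast; ring
  have hch : (((2 * k).choose k : ℕ) : ℚ_[p]) * (k.factorial : ℚ_[p]) * (k.factorial : ℚ_[p])
      = ((2 * k).factorial : ℚ_[p]) := by
    have := Nat.choose_mul_factorial_mul_factorial (show k ≤ 2 * k by omega)
    rw [show 2 * k - k = k by omega] at this
    exact_mod_cast congrArg (Nat.cast : ℕ → ℚ_[p]) this
  have hch0 : (((2 * k).choose k : ℕ) : ℚ_[p]) ≠ 0 :=
    Nat.cast_ne_zero.mpr (Nat.choose_pos (by omega)).ne'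
  unfold gbinom
  rw [hprod]
  rw [div_mul_div_comm, div_div,
    div_eq_div_iff (mul_ne_zero (mul_ne_zero (fact_ne p k) (fact_ne p k)) hch0) (fact_ne p (2*k))]
  rw [← hch]; ring

lemma gbinom_natCast (N k : ℕ) (h : k ≤ N) :
    gbinom p (N : ℚ_[p]) k = ((N.choose k : ℕ) : ℚ_[p]) := by
  have hprod : (∏ i ∈ Finset.range k, ((N : ℚ_[p]) - (i : ℚ_[p])))
      = ((N.descFactorial k : ℕ) : ℚ_[p]) := by
    rw [Nat.descFactorial_eq_prod_range, Nat.cast_prod]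
    refine Finset.prod_congr rfl fun i hi => ?_
    have hi' : i ≤ N := by
      have := Finset.mem_range.mp hi; omega
    push_cast [Nat.cast_sub hi']
    ring
  have hdesc : N.choose k * k.factorial = N.descFactorial k := by
    have h1 := Nat.choose_mul_factorial_mul_factorial h
    have h2 := Nat.factorial_mul_descFactorial h
    have h3 : N.choose k * k.factorial * (N - k).factorial
        = N.descFactorial k * (N - k).factorial := by rw [h1, mul_comm]; exact h2.symm
    exact Nat.eq_of_mul_eq_mul_right (Nat.factorial_pos _) h3
  unfold gbinom
  rw [hprod, ← hdesc]
  push_cast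
  rw [mul_div_assoc, div_self (fact_ne p k), mul_one]

lemma tele (x dd : ℚ_[p]) (hd : dd ≠ 0) (n : ℕ) :
    ∑ k ∈ Finset.range (n + 1),
        (x ^ 2 + x - (1 + 4 * dd) * (k : ℚ_[p]) ^ 2 - (1 - 2 * dd) * (k : ℚ_[p])) *
          ((dd ^ k)⁻¹ * gbinom p (x + (k : ℚ_[p])) (2 * k))
      = (x - (n : ℚ_[p])) * (x + (n : ℚ_[p]) + 1) * (dd ^ n)⁻¹ * gbinom p (x + (n : ℚ_[p])) (2 * n) := by
  induction n with
  | zero =>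
      simp [gbinom]
      ring
  | succ n ih =>
      rw [Finset.sum_range_succ, ih]
      have hstep := gbinom_step p (x + (n : ℚ_[p]) + 1) (2 * n)
      rw [show 2 * n + 2 = 2 * (n + 1) from by ring,
        show x + (n:ℚ_[p]) + 1 - 1 = x + (n:ℚ_[p]) from by ring] at hstep
      have key : (x - (n:ℚ_[p])) * (x + (n:ℚ_[p]) + 1) * gbinom p (x + (n : ℚ_[p])) (2 * n)
          = ((2*(n:ℚ_[p]) + 2) * (2*(n:ℚ_[p]) + 1)) * gbinom p (x + (n : ℚ_[p]) + 1) (2 * (n + 1)) := by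
        push_cast at hstep
        linear_combination -hstep
      have harg : ((n+1 : ℕ) : ℚ_[p]) = (n:ℚ_[p]) + 1 := by push_cast; ring
      rw [harg, show x + ((n:ℚ_[p])+1) = x + (n:ℚ_[p]) + 1 from by ring]
      simp only [pow_succ dd n, mul_inv]
      have hdn : dd ^ n ≠ 0 := pow_ne_zero _ hd
      field_simp
      linear_combination dd * key

end Aux

theorem stmt7 (p : ℕ) [Fact p.Prime] (hp : 3 ≤ p)
    (d : ℚ) (hd0 : d ≠ 0) (hdu : ‖(d : ℚ_[p])‖ = 1)
    (x m : ℤ_[p]) (a : ℕ) (ha : (p - 1) / 2 < a) (ha' : a < p)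
    (hx : (x : ℚ_[p]) = (a : ℚ_[p]) + (p : ℚ_[p]) * (m : ℚ_[p])) :
    ‖((∑ k ∈ Finset.range ((p - 1) / 2 + 1),
        ((x : ℚ_[p]) ^ 2 + (x : ℚ_[p]) - (1 + 4 * (d : ℚ_[p])) * (k : ℚ_[p]) ^ 2
            - (1 - 2 * (d : ℚ_[p])) * (k : ℚ_[p])) *
          ((d : ℚ_[p]) ^ (-(k : ℤ)) * gbinom p (x : ℚ_[p]) k * gbinom p ((x : ℚ_[p]) + (k : ℚ_[p])) k
            / (((2 * k).choose k : ℕ) : ℚ_[p]))) -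
      ((1 + (m : ℚ_[p])) * (p : ℚ_[p]) / (d : ℚ_[p]) ^ ((p - 1) / 2)) *
        (((a + (p + 1) / 2).choose (p + 1) : ℕ) : ℚ_[p])) / (p : ℚ_[p]) ^ 2‖ ≤ 1 := by
  have hprime : p.Prime := Fact.out
  have hodd : p % 2 = 1 := Nat.odd_iff.mp (hprime.odd_of_ne_two (by omega))
  set n : ℕ := (p - 1) / 2 with hn
  have hpn : p = 2 * n + 1 := by omega
  have hna : n < a := ha
  set b : ℕ := a + n + 1 with hb
  have hbp : p + 1 ≤ b := by omega
  set c : ℕ := b - p with hc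
  have hbc : b = p + c := by omega
  have hc1 : 1 ≤ c := by omega
  have hcn : c ≤ n := by omega
  have hd : (d : ℚ_[p]) ≠ 0 := by
    intro h; rw [h, norm_zero] at hdu; norm_num at hdu
  set dd : ℚ_[p] := (d : ℚ_[p]) with hdd
  set X : ℚ_[p] := (x : ℚ_[p]) with hX
  clear_value n b c dd X
  -- Step 1: rewrite summands and telescope
  have hsum : (∑ k ∈ Finset.range (n + 1),
        (X ^ 2 + X - (1 + 4 * dd) * (k : ℚ_[p]) ^ 2 - (1 - 2 * dd) * (k : ℚ_[p])) *
          (dd ^ (-(k : ℤ)) * gbinom p X k * gbinom p (X + (k : ℚ_[p])) k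
            / (((2 * k).choose k : ℕ) : ℚ_[p])))
      = (X - (n : ℚ_[p])) * (X + (n : ℚ_[p]) + 1) * (dd ^ n)⁻¹ * gbinom p (X + (n : ℚ_[p])) (2 * n) := by
    rw [← tele p X dd hd n]
    refine Finset.sum_congr rfl fun k _ => ?_
    congr 1
    rw [zpow_neg, zpow_natCast, mul_assoc, mul_div_assoc, gbinom_mul]
  -- Step 2: convert to gbinom of (X+n+1) at p+1
  have hcoe : ∀ (s : Finset ℕ) (f : ℕ → ℤ_[p]),
      ((∏ i ∈ s, f i : ℤ_[p]) : ℚ_[p]) = ∏ i ∈ s, ((f i : ℤ_[p]) : ℚ_[p]) :=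
    fun s f => map_prod (PadicInt.Coe.ringHom) f s
  have hstep := gbinom_step p (X + (n : ℚ_[p]) + 1) (2 * n)
  rw [show X + (n:ℚ_[p]) + 1 - 1 = X + (n:ℚ_[p]) from by ring,
    show 2 * n + 2 = p + 1 from by omega] at hstep
  have hpc : (p:ℚ_[p]) = 2 * (n:ℚ_[p]) + 1 := by
    have h := congrArg (fun t : ℕ => (t : ℚ_[p])) hpn
    push_cast at h
    exact h
  have key2 : (X - (n:ℚ_[p])) * (X + (n:ℚ_[p]) + 1) * gbinom p (X + (n : ℚ_[p])) (2 * n)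
      = ((p:ℚ_[p]) + 1) * (p:ℚ_[p]) * gbinom p (X + (n : ℚ_[p]) + 1) (p + 1) := by
    push_cast at hstep
    linear_combination -hstep - ((p:ℚ_[p]) + 2*(n:ℚ_[p]) + 2) * gbinom p (X + (n:ℚ_[p]) + 1) (p+1) * hpc
  -- integral products
  set z1 : ℤ_[p] := ∏ i ∈ Finset.range (p+1), ((b:ℤ_[p]) + (p:ℤ_[p]) * m - (i:ℤ_[p])) with hz1def
  set z2 : ℤ_[p] := ∏ i ∈ Finset.range (p+1), ((b:ℤ_[p]) - (i:ℤ_[p])) with hz2def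
  have hfq : (((p+1).factorial : ℕ) : ℚ_[p]) ≠ 0 := fact_ne p (p+1)
  have hH : gbinom p (X + (n : ℚ_[p]) + 1) (p + 1)
      = ((z1 : ℚ_[p])) / (((p+1).factorial : ℕ) : ℚ_[p]) := by
    unfold gbinom
    congr 1
    rw [hz1def, hcoe]
    refine Finset.prod_congr rfl fun i _ => ?_
    have hbq : ((b:ℚ_[p])) = (a:ℚ_[p]) + (n:ℚ_[p]) + 1 := by rw [hb]; push_cast; ring
    push_cast
    rw [hx, hbq]
    ring
  have hC : (((a + (p + 1) / 2).choose (p + 1) : ℕ) : ℚ_[p])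
      = ((z2 : ℚ_[p])) / (((p+1).factorial : ℕ) : ℚ_[p]) := by
    have hab : a + (p + 1) / 2 = b := by omega
    rw [hab, ← gbinom_natCast p b (p+1) hbp]
    unfold gbinom
    congr 1
    rw [hz2def, hcoe]
    refine Finset.prod_congr rfl fun i _ => ?_
    push_cast
    ring
  -- divisibility
  have hcmem : c ∈ Finset.range (p+1) := Finset.mem_range.mpr (by omega)
  set A : ℤ_[p] := ∏ i ∈ (Finset.range (p+1)).erase c, ((b:ℤ_[p]) + (p:ℤ_[p]) * m - (i:ℤ_[p])) with hA
  set B : ℤ_[p] := ∏ i ∈ (Finset.range (p+1)).erase c, ((b:ℤ_[p]) - (i:ℤ_[p])) with hB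
  have hbZ : ((b:ℤ_[p])) = (p:ℤ_[p]) + (c:ℤ_[p]) := by rw [hbc]; push_cast; ring
  have hz1A : z1 = ((p:ℤ_[p]) * (1 + m)) * A := by
    rw [hz1def, ← Finset.mul_prod_erase _ _ hcmem, ← hA]
    congr 1
    rw [hbZ]; ring
  have hz2B : z2 = (p:ℤ_[p]) * B := by
    rw [hz2def, ← Finset.mul_prod_erase _ _ hcmem, ← hB]
    congr 1
    rw [hbZ]; ring
  have hAB : (p:ℤ_[p]) ∣ A - B := by
    refine prod_sub_prod_dvd _ _ _ _ fun i _ => ⟨m, by ring⟩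
  obtain ⟨t, ht⟩ := hAB
  set z : ℤ_[p] := ((p:ℤ_[p]) + 1) * z1 - (1 + m) * z2 with hzdef
  have hzw : z = (p:ℤ_[p])^2 * ((1 + m) * (A + t)) := by
    rw [hzdef, hz1A, hz2B]
    linear_combination ((p:ℤ_[p]) * (1 + m)) * ht
  have hznorm : ‖(z : ℚ_[p])‖ ≤ ((p:ℝ))⁻¹^2 := by
    rw [PadicInt.padic_norm_e_of_padicInt, hzw, norm_mul, norm_pow,
      PadicInt.norm_p]
    calc ((p:ℝ))⁻¹^2 * ‖(1 + m) * (A + t)‖ ≤ ((p:ℝ))⁻¹^2 * 1 := by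
          gcongr
          exact PadicInt.norm_le_one _
      _ = ((p:ℝ))⁻¹^2 := by ring
  -- norms of constants
  have hp0 : (0:ℝ) < (p:ℝ) := by exact_mod_cast hprime.pos
  have hpq : ((p:ℚ_[p])) ≠ 0 := by
    exact_mod_cast Nat.cast_ne_zero.mpr hprime.ne_zero
  have hndvd1 : ¬ p ∣ (p+1) := by
    intro h
    have h1 : p ∣ 1 := (Nat.dvd_add_right (dvd_refl p)).mp h
    have := Nat.le_of_dvd one_pos h1
    omega
  have hndvd2 : ¬ p ∣ (p-1).factorial := by
    rw [Nat.Prime.dvd_factorial hprime]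
    omega
  have hfacnorm : ‖(((p+1).factorial : ℕ) : ℚ_[p])‖ = ((p:ℝ))⁻¹ := by
    have h1 : (p+1).factorial = (p+1) * (p * (p-1).factorial) := by
      rw [Nat.factorial_succ]
      congr 1
      rw [show p = (p-1) + 1 from by omega, Nat.factorial_succ]
      congr 2 <;> omega
    rw [h1, Nat.cast_mul, Nat.cast_mul, norm_mul, norm_mul, Padic.norm_p,
      norm_nat_unit p _ hndvd1, norm_nat_unit p _ hndvd2]
    ring
  have hdn : dd ^ n ≠ 0 := pow_ne_zero _ hd
  have hzcast : ((z : ℤ_[p]) : ℚ_[p]) = ((p:ℚ_[p]) + 1) * (z1 : ℚ_[p]) - (1 + (m:ℚ_[p])) * (z2 : ℚ_[p]) := by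
    rw [hzdef]; push_cast; ring
  have key3 : (X - (n:ℚ_[p])) * (X + (n:ℚ_[p]) + 1) * (dd ^ n)⁻¹ * gbinom p (X + (n : ℚ_[p])) (2 * n)
      = ((p:ℚ_[p]) + 1) * (p:ℚ_[p]) * (dd ^ n)⁻¹ * ((z1 : ℚ_[p]) / (((p+1).factorial : ℕ) : ℚ_[p])) := by
    rw [← hH]
    linear_combination (dd ^ n)⁻¹ * key2
  -- assemble
  have hBIG : ((∑ k ∈ Finset.range (n + 1),
        (X ^ 2 + X - (1 + 4 * dd) * (k : ℚ_[p]) ^ 2 - (1 - 2 * dd) * (k : ℚ_[p])) *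
          (dd ^ (-(k : ℤ)) * gbinom p X k * gbinom p (X + (k : ℚ_[p])) k
            / (((2 * k).choose k : ℕ) : ℚ_[p]))) -
      ((1 + (m:ℚ_[p])) * (p:ℚ_[p]) / dd ^ n) * (((a + (p + 1) / 2).choose (p + 1) : ℕ) : ℚ_[p]))
        / (p:ℚ_[p]) ^ 2
      = (dd ^ n)⁻¹ * ((z : ℚ_[p])) / ((((p+1).factorial : ℕ) : ℚ_[p]) * (p:ℚ_[p])) := by
    rw [hsum, key3, hC, hzcast]
    field_simp
  rw [hBIG]
  rw [norm_div, norm_mul, norm_inv, norm_pow, norm_mul, hfacnorm, Padic.norm_p]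
  rw [hdu]
  simp only [one_pow, inv_one, one_mul]
  calc ‖((z : ℤ_[p]) : ℚ_[p])‖ / ((p:ℝ)⁻¹ * (p:ℝ)⁻¹) ≤ ((p:ℝ))⁻¹^2 / ((p:ℝ)⁻¹ * (p:ℝ)⁻¹) := by
        gcongr
    _ = 1 := by
        rw [sq]
        field_simp
end

section
/- Let p > 3 be a prime and let d be a nonzero rational number that is a p-adic unit. Then ∑_{k=0}^{(p−1)/2} (1 + (4−d)k² + ((8+d)/2)k) · C(2k,k)/d^k ≡ (−1/d)^{(p−1)/2} p² (1 + 2p·q_p(2) + p² q_p(2)²) (mod p⁵), where the congruence means the difference divided by p⁵ is a p-adic integer. -/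
open Finset
set_option linter.unusedSectionVars false
set_option maxHeartbeats 1000000
section main
variable {p : ℕ} [hp : Fact p.Prime]

lemma c3_zero : ((p : ZMod (p^3)))^3 = 0 := by
  rw [← Nat.cast_pow, ZMod.natCast_self]

lemma unit_cast {k : ℕ} (hk : ¬ p ∣ k) : IsUnit (k : ZMod (p^3)) := by
  rw [ZMod.isUnit_iff_coprime]
  exact Nat.Coprime.pow_right 3 ((hp.out.coprime_iff_not_dvd.mpr hk).symm)

lemma inv_eq_of_mul {n : ℕ} {x y : ZMod n} (hx : IsUnit x) (h : x * y = 1) : x⁻¹ = y := by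
  have h2 := ZMod.inv_mul_of_unit x hx
  calc x⁻¹ = x⁻¹ * (x * y) := by rw [h, mul_one]
  _ = (x⁻¹ * x) * y := by ring
  _ = y := by rw [h2, one_mul]

lemma inv_mul_nat {a b : ℕ} (ha : ¬ p ∣ a) (hb : ¬ p ∣ b) :
    (((a*b : ℕ) : ZMod (p^3)))⁻¹ = ((a : ZMod (p^3)))⁻¹ * ((b : ZMod (p^3)))⁻¹ := by
  have hab : ¬ p ∣ a*b := fun h => ((hp.out.dvd_mul.mp h).elim ha hb)
  refine inv_eq_of_mul (unit_cast hab) ?_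
  push_cast
  calc (a:ZMod (p^3)) * b * (((a : ZMod (p^3)))⁻¹ * ((b : ZMod (p^3)))⁻¹)
      = ((a:ZMod (p^3)) * ((a : ZMod (p^3)))⁻¹) * ((b:ZMod (p^3)) * ((b : ZMod (p^3)))⁻¹) := by ring
  _ = 1 := by rw [ZMod.mul_inv_of_unit _ (unit_cast ha), ZMod.mul_inv_of_unit _ (unit_cast hb), mul_one]

lemma kill {x : ZMod (p^3)} (h : (ZMod.castHom (dvd_pow_self p (three_ne_zero)) (ZMod p)) x = 0) :
    ((p : ZMod (p^3)))^2 * x = 0 := by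
  obtain ⟨v, rfl⟩ : ∃ v : ℕ, (v : ZMod (p^3)) = x := ⟨x.val, (ZMod.natCast_rightInverse x)⟩
  rw [map_natCast, ZMod.natCast_eq_zero_iff] at h
  obtain ⟨t, rfl⟩ := h
  push_cast
  rw [← mul_assoc, ← pow_succ, c3_zero, zero_mul]

lemma hom_inv {k : ℕ} (hk : ¬ p ∣ k) :
    (ZMod.castHom (dvd_pow_self p (three_ne_zero)) (ZMod p)) ((k : ZMod (p^3))⁻¹)
      = ((k : ZMod p))⁻¹ := by
  set φ := ZMod.castHom (dvd_pow_self p (three_ne_zero)) (ZMod p)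
  have h1 : (k : ZMod (p^3)) * (k : ZMod (p^3))⁻¹ = 1 := ZMod.mul_inv_of_unit _ (unit_cast hk)
  have h2 : (k : ZMod p) * φ ((k : ZMod (p^3))⁻¹) = 1 := by
    have := congrArg φ h1
    rwa [map_mul, map_natCast, map_one] at this
  have hk0 : (k : ZMod p) ≠ 0 := by
    rwa [Ne, ZMod.natCast_eq_zero_iff]
  exact (eq_inv_of_mul_eq_one_left ((mul_comm _ _).trans h2))


variable (p) in
noncomputable def Hs (n : ℕ) : ZMod (p^3) := ∑ k ∈ Finset.Icc 1 n, ((k : ZMod (p^3)))⁻¹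
variable (p) in
noncomputable def S2 (n : ℕ) : ZMod (p^3) := ∑ k ∈ Finset.Icc 1 n, (((k : ZMod (p^3)))⁻¹)^2
variable (p) in
noncomputable def Es (n : ℕ) : ZMod (p^3) := (Hs p n ^ 2 - S2 p n) * ((2 : ZMod (p^3)))⁻¹

lemma not_dvd_of_le {k : ℕ} (h1 : 1 ≤ k) (h2 : k ≤ p - 1) : ¬ p ∣ k := by
  intro hd
  have hp2 := hp.out.two_le
  have := Nat.le_of_dvd (by omega) hd
  omega

lemma two_inv2 (hp3 : 3 < p) : (2 : ZMod (p^3)) * ((2 : ZMod (p^3)))⁻¹ = 1 := by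
  have : ((2:ℕ) : ZMod (p^3)) * (((2:ℕ) : ZMod (p^3)))⁻¹ = 1 :=
    ZMod.mul_inv_of_unit _ (not_dvd_of_le (by omega) (by omega) |> unit_cast)
  simpa using this

lemma prod_expand (hp3 : 3 < p) (a : ZMod (p^3)) (n : ℕ) :
    ∏ j ∈ Icc 1 n, (1 - (p : ZMod (p^3)) * a * ((j : ZMod (p^3)))⁻¹)
      = 1 - (p : ZMod (p^3)) * a * Hs p n + (p : ZMod (p^3))^2 * a^2 * Es p n := by
  induction n with
  | zero => simp [Hs, S2, Es]
  | succ n ih =>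
    rw [Finset.prod_Icc_succ_top (by omega), ih]
    have hH : Hs p (n+1) = Hs p n + ((((n+1:ℕ)) : ZMod (p^3)))⁻¹ := by
      rw [Hs, Finset.sum_Icc_succ_top (by omega), Hs]
    have hS : S2 p (n+1) = S2 p n + (((((n+1:ℕ))) : ZMod (p^3)))⁻¹^2 := by
      rw [S2, Finset.sum_Icc_succ_top (by omega), S2]
    have h2 := two_inv2 (p := p) hp3
    have h3 := c3_zero (p := p)
    simp only [Es]
    rw [hH, hS]
    push_cast
    set c := (p : ZMod (p^3))
    set H := Hs p n
    set s := S2 p n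
    set u := (((n:ℕ)+1 : ZMod (p^3)))⁻¹
    set i2 := ((2 : ZMod (p^3)))⁻¹
    linear_combination (-(a^3*((H^2-s)*i2)*u))*h3 + (-(c^2*a^2*H*u))*h2

lemma choose_prod (a : ℕ) (ha : 1 ≤ a) {k : ℕ} (hk : k ≤ p - 1) :
    (((a*p - 1).choose k : ℕ) : ZMod (p^3))
      = (-1)^k * ∏ j ∈ Icc 1 k, (1 - (p : ZMod (p^3)) * a * ((j : ZMod (p^3)))⁻¹) := by
  have hp2 := hp.out.two_le
  induction k with
  | zero => simp
  | succ k ih =>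
    have hk' : k ≤ p - 1 := by omega
    have hnd : ¬ p ∣ (k+1) := not_dvd_of_le (by omega) hk
    have hu : (((k+1:ℕ)) : ZMod (p^3)) * (((k+1:ℕ)) : ZMod (p^3))⁻¹ = 1 :=
      ZMod.mul_inv_of_unit _ (unit_cast hnd)
    have hnat : (a*p-1).choose (k+1) * (k+1) = (a*p-1).choose k * (a*p-1-k) :=
      Nat.choose_succ_right_eq _ _
    have hcast := congrArg (fun t : ℕ => (t : ZMod (p^3))) hnat
    have hle2 : 1 ≤ a*p := Nat.one_le_iff_ne_zero.mpr (Nat.mul_ne_zero (by omega) (by omega))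
    have hle1 : k ≤ a*p - 1 := by
      have : p ≤ a*p := Nat.le_mul_of_pos_left p (by omega)
      omega
    simp only [Nat.cast_mul, Nat.cast_sub hle1, Nat.cast_sub hle2] at hcast
    push_cast at hcast
    refine (unit_cast hnd).mul_left_cancel ?_
    rw [Finset.prod_Icc_succ_top (by omega)]
    push_cast at hcast ⊢
    calc ((k:ZMod (p^3))+1) * ((a*p-1).choose (k+1) : ZMod (p^3))
        = ((a*p-1).choose k : ZMod (p^3)) * ((a:ZMod (p^3))*(p:ZMod (p^3))-1-(k:ZMod (p^3))) := by
          rw [← hcast]; ring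
      _ = _ := by
          rw [ih hk']
          have hu2 : ((k:ZMod (p^3))+1) * (((k:ZMod (p^3))+1))⁻¹ = 1 := by exact_mod_cast hu
          push_cast
          linear_combination (-((-1:ZMod (p^3))^k * (∏ j ∈ Icc 1 k, (1 - (p : ZMod (p^3)) * (a:ZMod (p^3)) * ((j : ZMod (p^3)))⁻¹)) * ((a:ZMod (p^3))*(p:ZMod (p^3))))) * hu2

-- Part 3a : pairing / mod-p sum facts
lemma sum_half {M : Type*} [AddCommMonoid M] {m : ℕ} (hm : p = 2*m+1) (f : ℕ → M) :
    ∑ k ∈ Icc 1 (p-1), f k = ∑ k ∈ Icc 1 m, f k + ∑ k ∈ Icc 1 m, f (p - k) := by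
  have h1 : Icc 1 (p-1) = Ioc 0 (p-1) := by ext x; simp only [Finset.mem_Icc, Finset.mem_Ioc]; omega
  have h2 : Icc 1 m = Ioc 0 m := by ext x; simp only [Finset.mem_Icc, Finset.mem_Ioc]; omega
  rw [h1, h2, ← Finset.sum_Ioc_consecutive f (by omega : 0 ≤ m) (by omega : m ≤ p-1)]
  congr 1
  refine Finset.sum_nbij' (fun k => p - k) (fun k => p - k) ?_ ?_ ?_ ?_ ?_
  all_goals intro a ha; simp only [Finset.mem_Ioc] at ha ⊢
  · omega
  · omega
  · show p - (p - a) = a; omega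
  · show p - (p - a) = a; omega
  · show f a = f (p - (p - a)); congr 1; omega

lemma F_inv_sq_full (hp3 : 3 < p) : ∑ k ∈ Icc 1 (p-1), (((k : ZMod p))⁻¹)^2 = 0 := by
  have hcard : Fintype.card (ZMod p) = p := ZMod.card p
  have h0 : ∑ x : ZMod p, x^2 = 0 := by
    apply FiniteField.sum_pow_lt_card_sub_one
    omega
  have h1 : ∑ x : ZMod p, (x⁻¹)^2 = 0 := by
    rw [← h0]
    exact Finset.sum_bijective _ inv_involutive.bijective (by simp) (fun x _ => rfl)
  rw [← h1, ← Finset.sum_erase (Finset.univ) (f := fun x : ZMod p => (x⁻¹)^2) (a := 0) (by simp)]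
  refine Finset.sum_nbij' (fun k : ℕ => ((k : ZMod p))) (fun x => x.val) ?_ ?_ ?_ ?_ ?_
  · intro a ha
    simp only [Finset.mem_Icc] at ha
    simp only [Finset.mem_erase, Finset.mem_univ, and_true]
    rw [Ne, ZMod.natCast_eq_zero_iff]
    exact not_dvd_of_le ha.1 ha.2
  · intro x hx
    simp only [Finset.mem_erase, Finset.mem_univ, and_true] at hx
    simp only [Finset.mem_Icc]
    have h1 : x.val ≠ 0 := fun h => hx ((ZMod.val_eq_zero x).mp h)
    have h2 : x.val < p := ZMod.val_lt x
    omega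
  · intro a ha
    simp only [Finset.mem_Icc] at ha
    exact ZMod.val_natCast_of_lt (by omega)
  · intro x hx; exact ZMod.natCast_rightInverse x
  · intro a ha; rfl

lemma F_inv_sq_half {m : ℕ} (hp3 : 3 < p) (hm : p = 2*m+1) :
    ∑ k ∈ Icc 1 m, (((k : ZMod p))⁻¹)^2 = 0 := by
  have h0 := F_inv_sq_full (p := p) hp3
  rw [sum_half hm] at h0
  have h1 : ∀ k ∈ Icc 1 m, ((((p - k : ℕ) : ZMod p))⁻¹)^2 = (((k : ZMod p))⁻¹)^2 := by
    intro k hk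
    simp only [Finset.mem_Icc] at hk
    have : ((p - k : ℕ) : ZMod p) = -(k : ZMod p) := by
      rw [Nat.cast_sub (by omega), ZMod.natCast_self]; ring
    rw [this, inv_neg]; ring
  rw [Finset.sum_congr rfl h1] at h0
  have h2 : (2 : ZMod p) ≠ 0 := by
    have : ((2:ℕ) : ZMod p) ≠ 0 := by
      rw [Ne, ZMod.natCast_eq_zero_iff]
      intro h; have := Nat.le_of_dvd (by omega) h; omega
    simpa using this
  have := mul_eq_zero.mp (show (2:ZMod p) * (∑ k ∈ Icc 1 m, (((k : ZMod p))⁻¹)^2) = 0 by rw [two_mul]; linear_combination h0)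
  tauto
-- Part 3b
variable (p) in
noncomputable def Asum : ZMod (p^3) := ∑ k ∈ Icc 1 (p-1), (-1)^(k+1) * ((k : ZMod (p^3)))⁻¹
variable (p) in
noncomputable def Tsum : ZMod (p^3) := ∑ k ∈ Icc 1 (p-1), (-1)^(k+1) * ((k : ZMod (p^3)))⁻¹ * Hs p (k-1)

lemma wolst {m : ℕ} (hp3 : 3 < p) (hm : p = 2*m+1) : (p : ZMod (p^3)) * Hs p (p-1) = 0 := by
  have hpair : ∀ k ∈ Icc 1 m, ((k:ZMod (p^3)))⁻¹ + (((p-k:ℕ) : ZMod (p^3)))⁻¹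
      = (p:ZMod (p^3)) * (((k:ZMod (p^3)))⁻¹ * (((p-k:ℕ):ZMod (p^3)))⁻¹) := by
    intro k hk
    simp only [Finset.mem_Icc] at hk
    have hk1 : ¬ p ∣ k := not_dvd_of_le hk.1 (by omega)
    have hk2 : ¬ p ∣ (p-k) := not_dvd_of_le (by omega) (by omega)
    have h1 := ZMod.mul_inv_of_unit _ (unit_cast hk1)
    have h2 := ZMod.mul_inv_of_unit _ (unit_cast (p := p) hk2)
    have hsum : ((k : ℕ) :ZMod (p^3)) + (((p-k:ℕ)) : ZMod (p^3)) = (p:ZMod (p^3)) := by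
      rw [← Nat.cast_add]; congr 1; omega
    rw [← hsum]
    linear_combination (-(((p-k:ℕ):ZMod (p^3)))⁻¹) * h1 + (-((k:ZMod (p^3)))⁻¹) * h2
  have hH : Hs p (p-1) = (p:ZMod (p^3)) * ∑ k ∈ Icc 1 m, (((k:ZMod (p^3)))⁻¹ * (((p-k:ℕ):ZMod (p^3)))⁻¹) := by
    rw [Hs, sum_half hm (fun k => ((k:ZMod (p^3)))⁻¹), Finset.mul_sum, ← Finset.sum_add_distrib]
    exact Finset.sum_congr rfl hpair
  rw [hH, ← mul_assoc, ← pow_two]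
  apply kill
  rw [map_sum]
  have hterm : ∀ k ∈ Icc 1 m, (ZMod.castHom (dvd_pow_self p three_ne_zero) (ZMod p))
      (((k:ZMod (p^3)))⁻¹ * (((p-k:ℕ):ZMod (p^3)))⁻¹) = -((((k:ZMod p))⁻¹)^2) := by
    intro k hk; simp only [Finset.mem_Icc] at hk
    rw [map_mul, hom_inv (not_dvd_of_le hk.1 (by omega)), hom_inv (not_dvd_of_le (by omega) (by omega))]
    have hneg : ((p - k : ℕ) : ZMod p) = -(k : ZMod p) := by
      rw [Nat.cast_sub (by omega), ZMod.natCast_self]; ring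
    rw [hneg, inv_neg]; ring
  rw [Finset.sum_congr rfl hterm, Finset.sum_neg_distrib, F_inv_sq_half hp3 hm, neg_zero]

lemma A_eq {m : ℕ} (hp3 : 3 < p) (hm : p = 2*m+1) : Asum p = Hs p (p-1) - Hs p m := by
  have h2i := two_inv2 (p := p) hp3
  have key : Hs p (p-1) - Asum p = Hs p m := by
    rw [Hs, Asum, ← Finset.sum_sub_distrib]
    have hsub : (Icc 1 m).image (fun j => 2*j) ⊆ Icc 1 (p-1) := by
      intro x hx
      simp only [Finset.mem_image, Finset.mem_Icc] at hx ⊢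
      obtain ⟨j, hj, rfl⟩ := hx; omega
    rw [← Finset.sum_subset hsub ?van]
    case van =>
      intro x hx hnx
      simp only [Finset.mem_Icc] at hx
      simp only [Finset.mem_image, Finset.mem_Icc] at hnx
      have hodd : Odd x := by
        rcases Nat.even_or_odd x with he | ho
        · obtain ⟨t, rfl⟩ := he
          exact absurd ⟨t, by omega, by omega⟩ hnx
        · exact ho
      obtain ⟨t, rfl⟩ := hodd
      have : ((-1 : ZMod (p^3)))^(2*t+1+1) = 1 := Even.neg_one_pow ⟨t+1, by ring⟩
      rw [this]; ring
    · rw [Finset.sum_image (by intro a _ b _ h; simp only at h; omega), Hs]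
      refine Finset.sum_congr rfl ?_
      intro j hj
      simp only [Finset.mem_Icc] at hj
      have hodd : ((-1 : ZMod (p^3)))^(2*j+1) = -1 := Odd.neg_one_pow ⟨j, by ring⟩
      have hj' : ¬ p ∣ j := not_dvd_of_le hj.1 (by omega)
      have h2 : ¬ p ∣ 2 := by intro h; have := Nat.le_of_dvd (by omega) h; omega
      have hinv : (((2*j : ℕ)) : ZMod (p^3))⁻¹ = ((2:ℕ):ZMod (p^3))⁻¹ * ((j:ℕ):ZMod (p^3))⁻¹ :=
        inv_mul_nat h2 hj'
      show (((2*j : ℕ)) : ZMod (p^3))⁻¹ - (-1)^(2*j+1) * (((2*j : ℕ)) : ZMod (p^3))⁻¹ = ((j : ℕ) : ZMod (p^3))⁻¹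
      rw [hodd, hinv]
      push_cast
      linear_combination (((j:ℕ):ZMod (p^3))⁻¹) * h2i
  linear_combination -key

lemma key_exp {a : ℕ} (hp3 : 3 < p) (ha : 1 ≤ a) :
    ∑ k ∈ Icc 1 (p-1), (((a*p).choose k : ℕ) : ZMod (p^3))
      = (p:ZMod (p^3)) * a * Asum p - (p:ZMod (p^3))^2 * a^2 * Tsum p := by
  have h3 := c3_zero (p := p)
  rw [Asum, Tsum, Finset.mul_sum, Finset.mul_sum, ← Finset.sum_sub_distrib]
  refine Finset.sum_congr rfl ?_
  intro k hk
  simp only [Finset.mem_Icc] at hk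
  have hknd : ¬ p ∣ k := not_dvd_of_le hk.1 hk.2
  have hu := ZMod.mul_inv_of_unit _ (unit_cast hknd)
  have hnat : a*p * ((a*p-1).choose (k-1)) = (a*p).choose k * k := by
    have hid := Nat.add_one_mul_choose_eq (a*p-1) (k-1)
    have h1 : a*p - 1 + 1 = a*p := by
      have : p ≤ a*p := Nat.le_mul_of_pos_left p (by omega)
      omega
    have h2 : k - 1 + 1 = k := by omega
    simp only [Nat.succ_eq_add_one, h1, h2] at hid
    exact hid
  have hcast : (a:ZMod (p^3)) * (p:ZMod (p^3)) * (((a*p-1).choose (k-1) : ℕ) : ZMod (p^3))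
      = (((a*p).choose k : ℕ):ZMod (p^3)) * (k:ZMod (p^3)) := by exact_mod_cast congrArg (Nat.cast : ℕ → ZMod (p^3)) hnat
  have hprod := choose_prod (p := p) a ha (k := k-1) (by omega)
  rw [prod_expand hp3] at hprod
  have hsgn : ((-1:ZMod (p^3)))^(k-1) = (-1)^(k+1) := by
    have hkk : k + 1 = (k-1) + 2 := by omega
    rw [hkk, pow_add]; ring
  rw [hsgn] at hprod
  refine (unit_cast hknd).mul_left_cancel ?_
  calc (k:ZMod (p^3)) * (((a*p).choose k : ℕ):ZMod (p^3))
      = (a:ZMod (p^3)) * (p:ZMod (p^3)) * (((a*p-1).choose (k-1) : ℕ) : ZMod (p^3)) := by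
        linear_combination -hcast
    _ = _ := by
        rw [hprod]
        linear_combination ((-(p:ZMod (p^3))*a*(-1:ZMod (p^3))^(k+1) + (p:ZMod (p^3))^2*a^2*(-1:ZMod (p^3))^(k+1)*(Hs p (k-1)))) * hu + ((a:ZMod (p^3))^3*(-1:ZMod (p^3))^(k+1)*(Es p (k-1))) * h3
-- Part 3c
lemma two_exp (hp3 : 3 < p) :
    (2:ZMod (p^3))^p = 2 + ((p:ZMod (p^3)) * Asum p - (p:ZMod (p^3))^2 * Tsum p) := by
  have hsplit : Finset.range (p+1) = insert 0 (insert p (Icc 1 (p-1))) := by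
    ext x; simp only [Finset.mem_range, Finset.mem_insert, Finset.mem_Icc]; omega
  have h0 : ((2^p : ℕ) : ZMod (p^3)) = ∑ k ∈ Finset.range (p+1), ((p.choose k : ℕ) : ZMod (p^3)) := by
    rw [← Nat.cast_sum]
    exact_mod_cast (congrArg (Nat.cast : ℕ → ZMod (p^3)) (Nat.sum_range_choose p)).symm
  rw [hsplit, Finset.sum_insert (by simp only [Finset.mem_insert, Finset.mem_Icc]; omega),
      Finset.sum_insert (by simp only [Finset.mem_Icc]; omega)] at h0
  have hk := key_exp (p := p) (a := 1) hp3 le_rfl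
  simp only [one_mul, Nat.cast_one, one_pow, mul_one] at hk
  rw [hk, Nat.choose_self, Nat.choose_zero_right] at h0
  push_cast at h0 ⊢
  linear_combination h0

lemma four_split : 4^p = 2 * (∑ k ∈ Finset.range p, (2*p).choose k) + (2*p).choose p := by
  have h1 : ∑ k ∈ Finset.range (2*p+1), (2*p).choose k = 4^p := by
    rw [Nat.sum_range_choose, pow_mul]; norm_num
  rw [← h1, Finset.range_eq_Ico,
     ← Finset.sum_Ico_consecutive (fun k => (2*p).choose k) (Nat.zero_le p) (by omega : p ≤ 2*p+1),
     Finset.sum_eq_sum_Ico_succ_bot (by omega : p < 2*p+1)]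
  have h2 : ∑ k ∈ Finset.Ico (p+1) (2*p+1), (2*p).choose k = ∑ k ∈ Finset.Ico 0 p, (2*p).choose k := by
    refine Finset.sum_nbij' (fun k => 2*p - k) (fun k => 2*p - k) ?_ ?_ ?_ ?_ ?_
    all_goals intro a ha; simp only [Finset.mem_Ico] at ha ⊢
    · omega
    · omega
    · show 2*p - (2*p - a) = a; omega
    · show 2*p - (2*p - a) = a; omega
    · exact (Nat.choose_symm (by omega : a ≤ 2*p)).symm
  rw [h2, ← Finset.range_eq_Ico]
  ring

lemma choose_mod_p {k : ℕ} (hk : k ≤ p - 1) :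
    (((p-1).choose k : ℕ) : ZMod p) = (-1)^k := by
  have h := congrArg (ZMod.castHom (dvd_pow_self p three_ne_zero) (ZMod p)) (choose_prod (p := p) 1 le_rfl hk)
  simp only [one_mul] at h
  rw [map_natCast, map_mul, map_pow, map_neg, map_one, map_prod] at h
  rw [h]
  have : ∀ j ∈ Icc 1 k, (ZMod.castHom (dvd_pow_self p three_ne_zero) (ZMod p))
      (1 - (p:ZMod (p^3)) * ((1:ℕ):ZMod (p^3)) * ((j : ZMod (p^3)))⁻¹) = 1 := by
    intro j hj
    rw [map_sub, map_one, map_mul, map_mul, map_natCast, ZMod.natCast_self]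
    ring
  rw [Finset.prod_congr rfl this, Finset.prod_const_one, mul_one]

lemma wolst_binom (hp3 : 3 < p) : (((2*p).choose p : ℕ) : ZMod (p^3)) = 2 := by
  have hv : (2*p).choose p = ∑ i ∈ Finset.range (p+1), p.choose i * p.choose (p-i) := by
    rw [two_mul, Nat.add_choose_eq, Finset.Nat.sum_antidiagonal_eq_sum_range_succ_mk]
  have hsplit : Finset.range (p+1) = insert 0 (insert p (Icc 1 (p-1))) := by
    ext x; simp only [Finset.mem_range, Finset.mem_insert, Finset.mem_Icc]; omega
  rw [hv, hsplit, Finset.sum_insert (by simp only [Finset.mem_insert, Finset.mem_Icc]; omega),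
      Finset.sum_insert (by simp only [Finset.mem_Icc]; omega)]
  have hmid : ∑ i ∈ Icc 1 (p-1), ((p.choose i : ℕ) : ZMod (p^3)) * ((p.choose (p-i) : ℕ) : ZMod (p^3)) = 0 := by
    have hterm : ∀ i ∈ Icc 1 (p-1), ((p.choose i : ℕ) : ZMod (p^3)) * ((p.choose (p-i) : ℕ) : ZMod (p^3))
        = (p:ZMod (p^3))^2 * (((i:ZMod (p^3)))⁻¹ * (((p-1).choose (i-1) : ℕ) : ZMod (p^3)))^2 := by
      intro i hi
      simp only [Finset.mem_Icc] at hi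
      have hind : ¬ p ∣ i := not_dvd_of_le hi.1 hi.2
      have hu := ZMod.mul_inv_of_unit _ (unit_cast hind)
      have hsymm : p.choose (p - i) = p.choose i := Nat.choose_symm (by omega)
      have hnat : p * ((p-1).choose (i-1)) = p.choose i * i := by
        have hid := Nat.add_one_mul_choose_eq (p-1) (i-1)
        have e1 : p - 1 + 1 = p := by omega
        have e2 : i - 1 + 1 = i := by omega
        simp only [Nat.succ_eq_add_one, e1, e2] at hid
        exact hid
      have hcast : (p:ZMod (p^3)) * (((p-1).choose (i-1) : ℕ) : ZMod (p^3))
          = ((p.choose i : ℕ) : ZMod (p^3)) * (i:ZMod (p^3)) := by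
        exact_mod_cast congrArg (Nat.cast : ℕ → ZMod (p^3)) hnat
      rw [hsymm]
      refine ((unit_cast hind).pow 2).mul_left_cancel ?_
      calc (i:ZMod (p^3))^2 * (((p.choose i :ℕ): ZMod (p^3)) * ((p.choose i :ℕ): ZMod (p^3)))
          = ((p.choose i :ℕ): ZMod (p^3)) * (i:ZMod (p^3)) * (((p.choose i :ℕ): ZMod (p^3)) * (i:ZMod (p^3))) := by ring
        _ = ((p:ZMod (p^3)) * (((p-1).choose (i-1) : ℕ) : ZMod (p^3))) * ((p:ZMod (p^3)) * (((p-1).choose (i-1) : ℕ) : ZMod (p^3))) := by rw [hcast]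
        _ = _ := by
            linear_combination (-((p:ZMod (p^3))^2 * (((p-1).choose (i-1) : ℕ) : ZMod (p^3))^2 * ((i:ZMod (p^3)) * ((i:ZMod (p^3)))⁻¹ + 1))) * hu
    rw [Finset.sum_congr rfl hterm, ← Finset.mul_sum]
    apply kill
    rw [map_sum]
    have hphi : ∀ i ∈ Icc 1 (p-1), (ZMod.castHom (dvd_pow_self p three_ne_zero) (ZMod p))
        ((((i:ZMod (p^3)))⁻¹ * (((p-1).choose (i-1) : ℕ) : ZMod (p^3)))^2) = (((i : ZMod p))⁻¹)^2 := by
      intro i hi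
      simp only [Finset.mem_Icc] at hi
      rw [map_pow, map_mul, hom_inv (not_dvd_of_le hi.1 hi.2), map_natCast,
          choose_mod_p (by omega), mul_pow, ← pow_mul]
      have : (-1 : ZMod p)^((i-1)*2) = 1 := Even.neg_one_pow ⟨i-1, by ring⟩
      rw [this, mul_one]
    rw [Finset.sum_congr rfl hphi, F_inv_sq_full hp3]
  push_cast
  rw [hmid, Nat.choose_self, Nat.choose_zero_right, Nat.sub_self, Nat.sub_zero, Nat.choose_self,
      Nat.choose_zero_right]
  norm_num
-- Part 3d : Morley
lemma morleyR {m : ℕ} (hp3 : 3 < p) (hm : p = 2*m+1) :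
    (((p-1).choose m : ℕ) : ZMod (p^3)) = (-1)^m * ((2:ZMod (p^3))^(p-1))^2 := by
  have h3 := c3_zero (p := p)
  have h2i := two_inv2 (p := p) hp3
  have h2F : ((2:ℕ) : ZMod p) ≠ 0 := by
    rw [Ne, ZMod.natCast_eq_zero_iff]
    intro h; have := Nat.le_of_dvd (by omega) h; omega
  have hfl : (2 : ZMod p)^(p-1) = 1 := by
    have := ZMod.pow_card_sub_one_eq_one (a := (2 : ZMod p)) (by exact_mod_cast h2F)
    exact this
  have hdvd : p ∣ 2^(p-1) - 1 := by
    rw [← ZMod.natCast_eq_zero_iff, Nat.cast_sub Nat.one_le_two_pow]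
    push_cast
    rw [hfl]; ring
  have hQ : p * ((2^(p-1) - 1)/p) = 2^(p-1) - 1 := Nat.mul_div_cancel' hdvd
  set Q := (2^(p-1) - 1)/p with hQdef
  have hQR : (2:ZMod (p^3))^(p-1) = 1 + (p:ZMod (p^3)) * (Q:ZMod (p^3)) := by
    have hc := congrArg (Nat.cast : ℕ → ZMod (p^3)) hQ
    rw [Nat.cast_mul, Nat.cast_sub Nat.one_le_two_pow] at hc
    push_cast at hc
    linear_combination -hc
  set c := (p : ZMod (p^3)) with hcdef
  set x := c * (Q : ZMod (p^3)) with hxdef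
  have hE1 : c * Asum p - c^2 * Tsum p = 2 * x := by
    have h2p := two_exp (p := p) hp3
    have e : p - 1 + 1 = p := by omega
    have hpow : (2:ZMod (p^3))^p = (2:ZMod (p^3))^(p-1) * 2 :=
      calc (2:ZMod (p^3))^p = (2:ZMod (p^3))^(p-1+1) := by rw [e]
        _ = _ := pow_succ 2 (p-1)
    rw [hpow, hQR] at h2p
    linear_combination -h2p
  have hE2 : 4 * (c * Asum p) - 8 * (c^2 * Tsum p) = 8*x + 4*x^2 := by
    have h4R := congrArg (Nat.cast : ℕ → ZMod (p^3)) (four_split (p := p))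
    push_cast at h4R
    have hsplit : Finset.range p = insert 0 (Icc 1 (p-1)) := by
      ext y; simp only [Finset.mem_range, Finset.mem_insert, Finset.mem_Icc]; omega
    rw [hsplit, Finset.sum_insert (by simp only [Finset.mem_Icc]; omega)] at h4R
    have hk2 := key_exp (p := p) (a := 2) hp3 (by omega)
    push_cast at hk2
    rw [hk2, Nat.choose_zero_right] at h4R
    have hwb := wolst_binom (p := p) hp3
    push_cast at hwb
    rw [hwb] at h4R
    have h4pow : (4:ZMod (p^3))^p = ((2:ZMod (p^3))^(p-1))^2 * 4 := by
      have h42 : (4:ZMod (p^3)) = 2^2 := by norm_num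
      rw [h42, ← pow_mul, ← pow_mul, ← pow_add]
      congr 1
      omega
    rw [h4pow, hQR] at h4R
    linear_combination -h4R
  have h4u : ¬ p ∣ 4 := by intro h; have := Nat.le_of_dvd (by omega) h; omega
  have hE3 : c^2 * Tsum p = -x^2 := by
    have h40 : ((4:ℕ) : ZMod (p^3)) * (c^2*Tsum p + x^2) = ((4:ℕ) : ZMod (p^3)) * 0 := by
      push_cast
      linear_combination 4*hE1 - hE2
    have := (unit_cast h4u).mul_left_cancel h40
    linear_combination this
  have hE5 : c * Hs p m = -(2*x) + x^2 := by
    have hW := wolst (p := p) hp3 hm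
    have hA := A_eq (p := p) hp3 hm
    linear_combination hW + c*hA - hE1 - hE3
  have hE6 : c^2 * S2 p m = 0 := by
    apply kill
    rw [S2, map_sum]
    have hterm : ∀ k ∈ Icc 1 m, (ZMod.castHom (dvd_pow_self p three_ne_zero) (ZMod p))
        ((((k : ZMod (p^3)))⁻¹)^2) = (((k : ZMod p))⁻¹)^2 := by
      intro k hk; simp only [Finset.mem_Icc] at hk
      rw [map_pow, hom_inv (not_dvd_of_le hk.1 (by omega))]
    rw [Finset.sum_congr rfl hterm, F_inv_sq_half hp3 hm]
  have hx3 : x^3 = 0 := by rw [hxdef, mul_pow, h3, zero_mul]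
  have hx4 : x^4 = 0 := by rw [show x^4 = x^3 * x from by ring, hx3, zero_mul]
  have hCm := choose_prod (p := p) 1 le_rfl (k := m) (by omega)
  rw [prod_expand hp3] at hCm
  simp only [one_mul, Nat.cast_one, one_pow, mul_one] at hCm
  rw [hCm, Es, hQR]
  set H := Hs p m
  set S := S2 p m
  set i2 := ((2 : ZMod (p^3)))⁻¹
  set s := ((-1 : ZMod (p^3)))^m
  linear_combination (s*(-1 + (c*H + 2*x - x^2)*i2 + 2*(-(2*x)+x^2)*i2)) * hE5
    + (-(s*i2)) * hE6 + (2*s*x^2) * h2i + (-(4*s*i2)) * hx3 + (s*i2) * hx4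

lemma morley {m : ℕ} (hp3 : 3 < p) (hm : p = 2*m+1) :
    (p:ℤ)^3 ∣ (-1)^m * ((p-1).choose m : ℤ) - 4^(p-1) := by
  have hR := morleyR (p := p) hp3 hm
  have hz : (((-1)^m * ((p-1).choose m : ℤ) - 4^(p-1) : ℤ) : ZMod (p^3)) = 0 := by
    push_cast
    rw [hR]
    have h4 : ((2:ZMod (p^3))^(p-1))^2 = 4^(p-1) := by
      rw [← pow_mul, mul_comm, pow_mul]; norm_num
    rw [h4]
    have hs : ((-1 : ZMod (p^3)))^m * (-1)^m = 1 := by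
      rw [← mul_pow]; norm_num
    linear_combination (4:ZMod (p^3))^(p-1) * hs
  rwa [ZMod.intCast_zmod_eq_zero_iff_dvd, Nat.cast_pow] at hz
-- Part 4 : telescoping sum
lemma sum_id {K : Type*} [Field K] [CharZero K] (d : K) (hd : d ≠ 0) (n : ℕ) :
    ∑ k ∈ Finset.range (n+1),
      (1 + (4 - d) * (k:K)^2 + ((8 + d)/2) * (k:K)) * (((2*k).choose k : ℕ) : K) / d^k
    = (2*(n:K)+1)^2 * (((2*n).choose n : ℕ) : K) / d^n := by
  induction n with
  | zero => norm_num
  | succ n ih =>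
    rw [Finset.sum_range_succ, ih]
    have hn1 : ((n:K)+1) ≠ 0 := Nat.cast_add_one_ne_zero n
    have hrec : (((2*(n+1)).choose (n+1) : ℕ) : K)
        = 2*(2*(n:K)+1) * (((2*n).choose n : ℕ) : K) / ((n:K)+1) := by
      have hnat : (n+1) * ((2*(n+1)).choose (n+1)) = 2*(2*n+1)*((2*n).choose n) := by
        have h := Nat.succ_mul_centralBinom_succ n
        simpa [Nat.centralBinom] using h
      have hcast : ((n:K)+1) * (((2*(n+1)).choose (n+1) : ℕ) : K)
          = 2*(2*(n:K)+1) * (((2*n).choose n : ℕ) : K) := by exact_mod_cast congrArg (Nat.cast : ℕ → K) hnat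
      field_simp
      linear_combination hcast
    rw [hrec]
    have hdn : d^n ≠ 0 := pow_ne_zero _ hd
    push_cast
    field_simp
    ring
end main

theorem stmt8 (p : ℕ) [Fact p.Prime] (hp : 3 < p)
    (d : ℚ) (hd0 : d ≠ 0) (hdu : ‖(d : ℚ_[p])‖ = 1) :
    ‖((∑ k ∈ Finset.range ((p - 1) / 2 + 1),
        (1 + (4 - (d : ℚ_[p])) * (k : ℚ_[p]) ^ 2 + ((8 + (d : ℚ_[p])) / 2) * (k : ℚ_[p])) *
          (((2 * k).choose k : ℕ) : ℚ_[p]) / (d : ℚ_[p]) ^ k) -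
      ((-1 / d : ℚ) : ℚ_[p]) ^ ((p - 1) / 2) * (p : ℚ_[p]) ^ 2 *
        (1 + 2 * (p : ℚ_[p]) * (fermatQuotient p 2 : ℚ_[p])
          + (p : ℚ_[p]) ^ 2 * (fermatQuotient p 2 : ℚ_[p]) ^ 2)) / (p : ℚ_[p]) ^ 5‖ ≤ 1 := by
  have hprime : p.Prime := Fact.out
  set m := (p - 1) / 2 with hmdef
  have hm : p = 2*m+1 := by
    obtain ⟨t, ht⟩ := hprime.odd_of_ne_two (by omega)
    omega
  set K := ℚ_[p]
  have hdK : (d : K) ≠ 0 := by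
    intro h; rw [h, norm_zero] at hdu; exact zero_ne_one hdu
  have hpK : ((p:ℕ) : K) ≠ 0 := by exact_mod_cast hprime.ne_zero
  have hS := sum_id (K := K) (d : K) hdK m
  have hCm : (2*m).choose m = (p-1).choose m := by congr 1; omega
  have hp1 : (2*(m:K)+1) = (p:K) := by
    have h := (show ((p:ℕ) : K) = ((2*m+1 : ℕ) : K) by rw [← hm])
    push_cast at h
    rw [Nat.cast_mul, Nat.cast_ofNat] at h
    linear_combination -h
  rw [hCm, hp1] at hS
  set q : ℚ := fermatQuotient p 2 with hqdef
  have hq : 1 + (p:ℚ) * q = 2^(p-1) := by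
    rw [hqdef, fermatQuotient]
    have hp0 : ((p:ℕ):ℚ) ≠ 0 := by exact_mod_cast hprime.ne_zero
    field_simp
    norm_num
  have h2 : (1 + 2 * (p:ℚ) * q + (p:ℚ)^2 * q^2) = (4:ℚ)^(p-1) := by
    have h1 : (1 + 2 * (p:ℚ) * q + (p:ℚ)^2 * q^2) = (1 + (p:ℚ)*q)^2 := by ring
    rw [h1, hq, ← pow_mul, mul_comm, pow_mul]; norm_num
  have hfq : (1 + 2 * (p : K) * (q : K) + (p : K) ^ 2 * (q : K) ^ 2) = (4:K)^(p-1) := by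
    have h3 := congrArg (fun r : ℚ => (r : K)) h2
    push_cast at h3
    linear_combination h3
  obtain ⟨t, ht⟩ := morley (p := p) hp hm
  have htK : (-1:K)^m * (((p-1).choose m : ℕ) : K) - (4:K)^(p-1) = (p:K)^3 * ((t:ℤ) : K) := by
    have h4 := congrArg (Int.cast : ℤ → ℚ_[p]) ht
    push_cast at h4
    linear_combination h4
  have hneg : ((-1 / d : ℚ) : K) = -1 / (d : K) := by push_cast; ring
  have hsq : (-1:K)^m * (-1:K)^m = 1 := by rw [← mul_pow]; norm_num
  have hp5 : ((p:K))^5 ≠ 0 := pow_ne_zero 5 (by exact_mod_cast hpK)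
  have hdm : ((d:K))^m ≠ 0 := pow_ne_zero _ hdK
  have hDu : (d:K)^m * ((d:K)^m)⁻¹ = 1 := mul_inv_cancel₀ hdm
  have hnum : (p:K)^2 * (((p-1).choose m : ℕ) : K) - (-1:K)^m * (p:K)^2 * (4:K)^(p-1)
      = (-1:K)^m * (p:K)^5 * ((t:ℤ) : K) := by
    linear_combination ((-1:K)^m*(p:K)^2)*htK + (-((p:K)^2*(((p-1).choose m : ℕ) : K)))*hsq
  have key : ((∑ k ∈ Finset.range (m + 1),
        (1 + (4 - (d : K)) * (k : K) ^ 2 + ((8 + (d : K)) / 2) * (k : K)) *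
          (((2 * k).choose k : ℕ) : K) / (d : K) ^ k) -
      ((-1 / d : ℚ) : K) ^ m * (p : K) ^ 2 *
        (1 + 2 * (p : K) * (q : K) + (p : K) ^ 2 * (q : K) ^ 2)) / (p : K) ^ 5
      = (-1:K)^m * ((t:ℤ) : K) / (d : K)^m := by
    rw [hS, hfq, hneg, div_pow]
    rw [div_eq_div_iff hp5 hdm]
    linear_combination ((d:K)^m*((d:K)^m)⁻¹)*hnum + ((-1:K)^m*(p:K)^5*((t:ℤ):K))*hDu
  rw [key, norm_div, norm_mul, norm_pow, norm_pow, norm_neg, norm_one, one_pow, hdu, one_pow,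
      one_mul, div_one]
  exact Padic.norm_int_le_one t
end

section
/- Let n be a positive integer, let d be a nonzero rational number, and let x be a p-adic integer (for an odd prime p). Then the following chain of identities holds in ℚ_p: ∑_{k=0}^{n−1} (x² + x − (1+4d)k² − (1−2d)k) · d^{−k} C(x,k)C(x+k,k)/C(2k,k) = −2nd + n·∑_{k=0}^{n−1} (x² + x + 2d − (1+4d)k² − (1+2d)k) · d^{−k} C(x,k)C(x+k,k)/((k+1)C(2k,k)) = (2n−1)·∑_{k=0}^{n−1} (x² + x − (1+4d)k² − (1+2d)k) · d^{−k} C(x,k)C(x+k,k)/((2k+1)C(2k,k)). -/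
variable {p : ℕ} [Fact p.Prime]

lemma gbinom_succ (y : ℚ_[p]) (k : ℕ) :
    gbinom p y (k + 1) = gbinom p y k * (y - (k : ℚ_[p])) / ((k : ℚ_[p]) + 1) := by
  have hf : ((k.factorial : ℚ_[p])) ≠ 0 := Nat.cast_ne_zero.mpr k.factorial_ne_zero
  unfold gbinom
  rw [Finset.prod_range_succ, Nat.factorial_succ]
  push_cast
  rw [div_mul_eq_mul_div, div_div, mul_comm ((k : ℚ_[p]) + 1)]

lemma gbinom_shift (y : ℚ_[p]) (k : ℕ) :
    gbinom p (y + ((k : ℚ_[p]) + 1)) (k + 1)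
      = gbinom p (y + (k : ℚ_[p])) k * (y + (k : ℚ_[p]) + 1) / ((k : ℚ_[p]) + 1) := by
  have hf : ((k.factorial : ℚ_[p])) ≠ 0 := Nat.cast_ne_zero.mpr k.factorial_ne_zero
  have hk1 : ((k : ℚ_[p]) + 1) ≠ 0 := Nat.cast_add_one_ne_zero k
  unfold gbinom
  rw [Finset.prod_range_succ', Nat.factorial_succ]
  have h1 : (∏ i ∈ Finset.range k, (y + ((k : ℚ_[p]) + 1) - ((i + 1 : ℕ) : ℚ_[p])))
      = ∏ i ∈ Finset.range k, (y + (k : ℚ_[p]) - (i : ℚ_[p])) := by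
    apply Finset.prod_congr rfl
    intro i _
    push_cast; ring
  rw [h1]; push_cast; field_simp; ring

lemma choose_rec (k : ℕ) :
    ((k : ℚ_[p]) + 1) * (((2 * (k + 1)).choose (k + 1) : ℕ) : ℚ_[p])
      = 2 * (2 * (k : ℚ_[p]) + 1) * (((2 * k).choose k : ℕ) : ℚ_[p]) := by
  have h := Nat.succ_mul_centralBinom_succ k
  have hc : ∀ m : ℕ, Nat.centralBinom m = (2 * m).choose m := fun m => rfl
  rw [hc, hc] at h
  exact_mod_cast congrArg (fun m : ℕ => (m : ℚ_[p])) h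

lemma choose_ne (k : ℕ) : (((2 * k).choose k : ℕ) : ℚ_[p]) ≠ 0 :=
  Nat.cast_ne_zero.mpr (Nat.choose_pos (by omega)).ne'

lemma two_cast_ne (k : ℕ) : (2 * (k : ℚ_[p]) + 1) ≠ 0 := by
  have h : ((2 * k + 1 : ℕ) : ℚ_[p]) ≠ 0 := Nat.cast_ne_zero.mpr (by omega)
  push_cast at h; exact h

lemma B_succ (q : ℚ_[p]) (hq : q ≠ 0) (y : ℚ_[p]) (n : ℕ) :
    q ^ (-((n : ℤ) + 1)) * gbinom p y (n + 1) * gbinom p (y + ((n : ℚ_[p]) + 1)) (n + 1)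
        / (((2 * (n + 1)).choose (n + 1) : ℕ) : ℚ_[p])
      = q ^ (-(n : ℤ)) * gbinom p y n * gbinom p (y + (n : ℚ_[p])) n
            / (((2 * n).choose n : ℕ) : ℚ_[p])
          * ((y - (n : ℚ_[p])) * (y + (n : ℚ_[p]) + 1))
          / (2 * q * ((n : ℚ_[p]) + 1) * (2 * (n : ℚ_[p]) + 1)) := by
  have hn1 : ((n : ℚ_[p]) + 1) ≠ 0 := Nat.cast_add_one_ne_zero n
  have h2n1 : (2 * (n : ℚ_[p]) + 1) ≠ 0 := two_cast_ne n
  have hc : (((2 * n).choose n : ℕ) : ℚ_[p]) ≠ 0 := choose_ne n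
  have hc2 : (((2 * (n + 1)).choose (n + 1) : ℕ) : ℚ_[p]) ≠ 0 := choose_ne (n + 1)
  have hE : q ^ (-(n : ℤ)) ≠ 0 := zpow_ne_zero _ hq
  have hrec := choose_rec (p := p) n
  have hzp : q ^ (-((n : ℤ) + 1)) = q ^ (-(n : ℤ)) * q⁻¹ := by
    have h : (-((n : ℤ) + 1)) = -(n : ℤ) + (-1) := by ring
    rw [h, zpow_add₀ hq, zpow_neg_one]
  rw [gbinom_succ, gbinom_shift, hzp]
  have hD : (2 * q * ((n : ℚ_[p]) + 1) * (2 * (n : ℚ_[p]) + 1)) ≠ 0 :=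
    mul_ne_zero (mul_ne_zero (mul_ne_zero two_ne_zero hq) hn1) h2n1
  rw [div_eq_div_iff hc2 hD]
  field_simp
  linear_combination (-(gbinom p y n * gbinom p (y + (n : ℚ_[p])) n
      * (y - (n : ℚ_[p])) * (y + (n : ℚ_[p]) + 1))) * hrec

lemma sum1 (q : ℚ_[p]) (hq : q ≠ 0) (y : ℚ_[p]) (n : ℕ) :
    (∑ k ∈ Finset.range n,
        (y ^ 2 + y - (1 + 4 * q) * (k : ℚ_[p]) ^ 2 - (1 - 2 * q) * (k : ℚ_[p])) *
          (q ^ (-(k : ℤ)) * gbinom p y k * gbinom p (y + (k : ℚ_[p])) k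
            / (((2 * k).choose k : ℕ) : ℚ_[p])))
      = 2 * q * (n : ℚ_[p]) * (2 * (n : ℚ_[p]) - 1) *
          (q ^ (-(n : ℤ)) * gbinom p y n * gbinom p (y + (n : ℚ_[p])) n
            / (((2 * n).choose n : ℕ) : ℚ_[p])) := by
  induction n with
  | zero => simp
  | succ n ih =>
    rw [Finset.sum_range_succ, ih]
    have hn1 : ((n : ℚ_[p]) + 1) ≠ 0 := Nat.cast_add_one_ne_zero n
    have h2n1 : (2 * (n : ℚ_[p]) + 1) ≠ 0 := two_cast_ne n
    have hc : (((2 * n).choose n : ℕ) : ℚ_[p]) ≠ 0 := choose_ne n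
    push_cast
    rw [B_succ q hq y n]
    set W := q ^ (-(n : ℤ)) * gbinom p y n * gbinom p (y + (n : ℚ_[p])) n
      / (((2 * n).choose n : ℕ) : ℚ_[p]) with hW
    field_simp
    ring

lemma sum2 (q : ℚ_[p]) (hq : q ≠ 0) (y : ℚ_[p]) (n : ℕ) :
    (∑ k ∈ Finset.range n,
        (y ^ 2 + y + 2 * q - (1 + 4 * q) * (k : ℚ_[p]) ^ 2 - (1 + 2 * q) * (k : ℚ_[p])) *
          (q ^ (-(k : ℤ)) * gbinom p y k * gbinom p (y + (k : ℚ_[p])) k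
            / (((k : ℚ_[p]) + 1) * (((2 * k).choose k : ℕ) : ℚ_[p]))))
      = 2 * q * (2 * (n : ℚ_[p]) - 1) *
          (q ^ (-(n : ℤ)) * gbinom p y n * gbinom p (y + (n : ℚ_[p])) n
            / (((2 * n).choose n : ℕ) : ℚ_[p])) + 2 * q := by
  induction n with
  | zero =>
    simp [gbinom]
  | succ n ih =>
    rw [Finset.sum_range_succ, ih]
    have hn1 : ((n : ℚ_[p]) + 1) ≠ 0 := Nat.cast_add_one_ne_zero n
    have h2n1 : (2 * (n : ℚ_[p]) + 1) ≠ 0 := two_cast_ne n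
    have hc : (((2 * n).choose n : ℕ) : ℚ_[p]) ≠ 0 := choose_ne n
    push_cast
    rw [B_succ q hq y n]
    have hterm : q ^ (-(n : ℤ)) * gbinom p y n * gbinom p (y + (n : ℚ_[p])) n
        / (((n : ℚ_[p]) + 1) * (((2 * n).choose n : ℕ) : ℚ_[p]))
        = (q ^ (-(n : ℤ)) * gbinom p y n * gbinom p (y + (n : ℚ_[p])) n
          / (((2 * n).choose n : ℕ) : ℚ_[p])) / ((n : ℚ_[p]) + 1) := by
      rw [div_div, mul_comm (((2 * n).choose n : ℕ) : ℚ_[p])]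
    rw [hterm]
    set W := q ^ (-(n : ℤ)) * gbinom p y n * gbinom p (y + (n : ℚ_[p])) n
      / (((2 * n).choose n : ℕ) : ℚ_[p]) with hW
    field_simp
    ring

lemma sum3 (q : ℚ_[p]) (hq : q ≠ 0) (y : ℚ_[p]) (n : ℕ) :
    (∑ k ∈ Finset.range n,
        (y ^ 2 + y - (1 + 4 * q) * (k : ℚ_[p]) ^ 2 - (1 + 2 * q) * (k : ℚ_[p])) *
          (q ^ (-(k : ℤ)) * gbinom p y k * gbinom p (y + (k : ℚ_[p])) k
            / ((2 * (k : ℚ_[p]) + 1) * (((2 * k).choose k : ℕ) : ℚ_[p]))))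
      = 2 * q * (n : ℚ_[p]) *
          (q ^ (-(n : ℤ)) * gbinom p y n * gbinom p (y + (n : ℚ_[p])) n
            / (((2 * n).choose n : ℕ) : ℚ_[p])) := by
  induction n with
  | zero => simp
  | succ n ih =>
    rw [Finset.sum_range_succ, ih]
    have hn1 : ((n : ℚ_[p]) + 1) ≠ 0 := Nat.cast_add_one_ne_zero n
    have h2n1 : (2 * (n : ℚ_[p]) + 1) ≠ 0 := two_cast_ne n
    have hc : (((2 * n).choose n : ℕ) : ℚ_[p]) ≠ 0 := choose_ne n
    push_cast
    rw [B_succ q hq y n]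
    have hterm : q ^ (-(n : ℤ)) * gbinom p y n * gbinom p (y + (n : ℚ_[p])) n
        / ((2 * (n : ℚ_[p]) + 1) * (((2 * n).choose n : ℕ) : ℚ_[p]))
        = (q ^ (-(n : ℤ)) * gbinom p y n * gbinom p (y + (n : ℚ_[p])) n
          / (((2 * n).choose n : ℕ) : ℚ_[p])) / (2 * (n : ℚ_[p]) + 1) := by
      rw [div_div, mul_comm (((2 * n).choose n : ℕ) : ℚ_[p])]
    rw [hterm]
    set W := q ^ (-(n : ℤ)) * gbinom p y n * gbinom p (y + (n : ℚ_[p])) n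
      / (((2 * n).choose n : ℕ) : ℚ_[p]) with hW
    field_simp
    ring

theorem stmt12 (p : ℕ) [Fact p.Prime] (hp : Odd p)
    (n : ℕ) (hn : 0 < n) (d : ℚ) (hd0 : d ≠ 0) (x : ℤ_[p]) :
    (∑ k ∈ Finset.range n,
        ((x : ℚ_[p]) ^ 2 + (x : ℚ_[p]) - (1 + 4 * (d : ℚ_[p])) * (k : ℚ_[p]) ^ 2
            - (1 - 2 * (d : ℚ_[p])) * (k : ℚ_[p])) *
          ((d : ℚ_[p]) ^ (-(k : ℤ)) * gbinom p (x : ℚ_[p]) k * gbinom p ((x : ℚ_[p]) + (k : ℚ_[p])) k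
            / (((2 * k).choose k : ℕ) : ℚ_[p]))) =
      -2 * (n : ℚ_[p]) * (d : ℚ_[p]) + (n : ℚ_[p]) *
        ∑ k ∈ Finset.range n,
          ((x : ℚ_[p]) ^ 2 + (x : ℚ_[p]) + 2 * (d : ℚ_[p])
              - (1 + 4 * (d : ℚ_[p])) * (k : ℚ_[p]) ^ 2
              - (1 + 2 * (d : ℚ_[p])) * (k : ℚ_[p])) *
            ((d : ℚ_[p]) ^ (-(k : ℤ)) * gbinom p (x : ℚ_[p]) k *
                gbinom p ((x : ℚ_[p]) + (k : ℚ_[p])) k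
              / (((k : ℚ_[p]) + 1) * (((2 * k).choose k : ℕ) : ℚ_[p]))) ∧
    -2 * (n : ℚ_[p]) * (d : ℚ_[p]) + (n : ℚ_[p]) *
        (∑ k ∈ Finset.range n,
          ((x : ℚ_[p]) ^ 2 + (x : ℚ_[p]) + 2 * (d : ℚ_[p])
              - (1 + 4 * (d : ℚ_[p])) * (k : ℚ_[p]) ^ 2
              - (1 + 2 * (d : ℚ_[p])) * (k : ℚ_[p])) *
            ((d : ℚ_[p]) ^ (-(k : ℤ)) * gbinom p (x : ℚ_[p]) k *
                gbinom p ((x : ℚ_[p]) + (k : ℚ_[p])) k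
              / (((k : ℚ_[p]) + 1) * (((2 * k).choose k : ℕ) : ℚ_[p])))) =
      (2 * (n : ℚ_[p]) - 1) *
        ∑ k ∈ Finset.range n,
          ((x : ℚ_[p]) ^ 2 + (x : ℚ_[p]) - (1 + 4 * (d : ℚ_[p])) * (k : ℚ_[p]) ^ 2
              - (1 + 2 * (d : ℚ_[p])) * (k : ℚ_[p])) *
            ((d : ℚ_[p]) ^ (-(k : ℤ)) * gbinom p (x : ℚ_[p]) k *
                gbinom p ((x : ℚ_[p]) + (k : ℚ_[p])) k
              / ((2 * (k : ℚ_[p]) + 1) * (((2 * k).choose k : ℕ) : ℚ_[p]))) := by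
  have hq : (d : ℚ_[p]) ≠ 0 := by exact_mod_cast hd0
  refine ⟨?_, ?_⟩
  · rw [sum1 (d : ℚ_[p]) hq ((x : ℚ_[p])) n, sum2 (d : ℚ_[p]) hq ((x : ℚ_[p])) n]
    ring
  · rw [sum2 (d : ℚ_[p]) hq ((x : ℚ_[p])) n, sum3 (d : ℚ_[p]) hq ((x : ℚ_[p])) n]
    ring
end

section
/- Let p ≥ 3 be a prime, let a be an integer with (p−1)/2 < a ≤ p−1, and let m be a p-adic integer. Then, with generalized binomial coefficients taken in ℚ_p, C(mp + a, (p+1)/2) · C(mp + (p+1)/2 + a, (p+1)/2) ≡ (−1)^{(p−1)/2}·4p·(1+m)·C(a + (p+1)/2, p+1) (mod p²), where C(a + (p+1)/2, p+1) is an ordinary binomial coefficient and the congruence means the difference divided by p² is a p-adic integer. -/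
open Finset

lemma padic_norm_nat_le_one {p : ℕ} [Fact p.Prime] (n : ℕ) : ‖(n : ℚ_[p])‖ ≤ 1 := by
  have := Padic.norm_int_le_one (p := p) (n : ℤ); push_cast at this; exact this

lemma padic_norm_nat_eq_one_of_not_dvd {p : ℕ} [Fact p.Prime] {K : ℕ} (h : ¬ p ∣ K) :
    ‖(K : ℚ_[p])‖ = 1 := by
  have h1 : ‖(K : ℚ_[p])‖ ≤ 1 := padic_norm_nat_le_one K
  have h2 : ¬ ‖((K : ℤ) : ℚ_[p])‖ < 1 := by
    rw [Padic.norm_intCast_lt_one_iff]; exact_mod_cast h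
  push_cast at h2
  linarith [lt_or_eq_of_le h1, not_lt.mp h2]

lemma padic_norm_prod_le_one {p : ℕ} [Fact p.Prime] {ι : Type*} (s : Finset ι) (f : ι → ℚ_[p])
    (h : ∀ i ∈ s, ‖f i‖ ≤ 1) : ‖∏ i ∈ s, f i‖ ≤ 1 := by
  rw [norm_prod]; exact Finset.prod_le_one (fun i _ => norm_nonneg _) h

lemma padic_norm_prod_sub_prod {p : ℕ} [Fact p.Prime] {ι : Type*} (s : Finset ι)
    (f g : ι → ℚ_[p]) {ε : ℝ} (hε0 : 0 ≤ ε)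
    (hf : ∀ i ∈ s, ‖f i‖ ≤ 1) (hg : ∀ i ∈ s, ‖g i‖ ≤ 1)
    (hd : ∀ i ∈ s, ‖f i - g i‖ ≤ ε) :
    ‖∏ i ∈ s, f i - ∏ i ∈ s, g i‖ ≤ ε := by
  classical
  induction s using Finset.induction_on with
  | empty => simpa using hε0
  | @insert a s ha ih =>
    rw [Finset.prod_insert ha, Finset.prod_insert ha]
    have key : f a * ∏ i ∈ s, f i - g a * ∏ i ∈ s, g i
        = f a * (∏ i ∈ s, f i - ∏ i ∈ s, g i) + (f a - g a) * ∏ i ∈ s, g i := by ring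
    rw [key]
    refine le_trans (Padic.nonarchimedean _ _) (max_le ?_ ?_)
    · rw [norm_mul]
      calc ‖f a‖ * ‖∏ i ∈ s, f i - ∏ i ∈ s, g i‖ ≤ 1 * ε := by
            apply mul_le_mul (hf a (mem_insert_self a s))
              (ih (fun i hi => hf i (mem_insert_of_mem hi))
                (fun i hi => hg i (mem_insert_of_mem hi))
                (fun i hi => hd i (mem_insert_of_mem hi))) (norm_nonneg _) zero_le_one
        _ = ε := one_mul ε
    · rw [norm_mul]
      calc ‖f a - g a‖ * ‖∏ i ∈ s, g i‖ ≤ ε * 1 := by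
            apply mul_le_mul (hd a (mem_insert_self a s))
              (padic_norm_prod_le_one s g (fun i hi => hg i (mem_insert_of_mem hi)))
              (norm_nonneg _) hε0
        _ = ε := mul_one ε

lemma choose_zmod_neg_one (p : ℕ) [Fact p.Prime] :
    ∀ j, j < p → (((p-1).choose j : ℕ) : ZMod p) = (-1)^j := by
  intro j
  induction j with
  | zero => intro _; simp
  | succ j ih =>
    intro hj
    have hjp : j < p := by omega
    have hjp1 : j ≤ p - 1 := by omega
    have hnd : ¬ p ∣ (j+1) := Nat.not_dvd_of_pos_of_lt (by omega) hj
    have hne : ((j+1 : ℕ) : ZMod p) ≠ 0 := by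
      rw [Ne, ZMod.natCast_eq_zero_iff]; exact hnd
    have key := Nat.choose_succ_right_eq (p-1) j
    have hcast : (((p-1).choose (j+1) * (j+1) : ℕ) : ZMod p)
        = (((p-1).choose j * ((p-1) - j) : ℕ) : ZMod p) := by rw [key]
    push_cast [Nat.cast_sub hjp1,
      Nat.cast_sub (show 1 ≤ p from (Fact.out : p.Prime).one_lt.le)] at hcast
    rw [ih hjp] at hcast
    rw [ZMod.natCast_self p] at hcast
    have h3 : (((p-1).choose (j+1) : ℕ) : ZMod p) * ((j:ZMod p)+1)
        = (-1)^(j+1) * ((j:ZMod p)+1) := by rw [hcast]; ring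
    exact mul_right_cancel₀ (by exact_mod_cast hne) h3

lemma u_cong (p : ℕ) [Fact p.Prime] (hp : 3 ≤ p) (hodd : p % 2 = 1)
    (q : ℕ) (hq : q = (p+1)/2) (u : ℕ) (hu : p * u = p.choose (q-1)) :
    (p:ℤ) ∣ (2 * u - 4 * (-1)^(q-1) : ℤ) := by
  have hp' : p.Prime := Fact.out
  have hq2 : 2 ≤ q := by omega
  have hid : p * (p-1).choose (q-2) = p.choose (q-1) * (q-1) := by
    have h := Nat.add_one_mul_choose_eq (p-1) (q-2)
    rw [show p-1+1 = p by omega, show q-2+1 = q-1 by omega] at h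
    exact h
  have hcancel : (p-1).choose (q-2) = u * (q-1) := by
    have : p * ((p-1).choose (q-2)) = p * (u * (q-1)) := by
      rw [hid, ← hu]; ring
    exact Nat.eq_of_mul_eq_mul_left hp'.pos this
  have hZ : (((p-1).choose (q-2) : ℕ) : ZMod p) = (-1)^(q-2) :=
    choose_zmod_neg_one p (q-2) (by omega)
  have hZ2 : ((u : ZMod p)) * ((q-1 : ℕ) : ZMod p) = (-1)^(q-2) := by
    rw [← hZ, hcancel]; push_cast; ring
  have h2q1 : (((q-1 : ℕ)) : ZMod p) * 2 = -1 := by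
    have hnat : (q-1) * 2 = p - 1 := by omega
    have h : ((((q-1)*2 : ℕ)) : ZMod p) = (((p-1 : ℕ)) : ZMod p) := by rw [hnat]
    push_cast [Nat.cast_sub (show 1 ≤ p by omega)] at h
    rw [ZMod.natCast_self p] at h
    rw [h]; ring
  have hufin : (u : ZMod p) = (-1)^(q-1) * 2 := by
    have h4 : (u : ZMod p) * (((q-1 : ℕ) : ZMod p) * 2) = (-1)^(q-2) * 2 := by
      rw [← mul_assoc, hZ2]
    rw [h2q1] at h4
    have h5 : (u : ZMod p) = -((-1)^(q-2) * 2) := by linear_combination -h4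
    rw [h5, show q-1 = (q-2)+1 by omega, pow_succ]
    ring
  rw [← ZMod.intCast_zmod_eq_zero_iff_dvd]
  push_cast
  rw [hufin]
  ring

lemma gbinom_key1 (p : ℕ) [Fact p.Prime] (hp : 3 ≤ p) (a : ℕ) (m : ℤ_[p])
    (q : ℕ) (hq : q = (p+1)/2) (hodd : p % 2 = 1) (N : ℕ) (hN : N = a + q) :
    gbinom p ((m : ℚ_[p]) * (p:ℚ_[p]) + (a:ℚ_[p])) q *
      gbinom p ((m : ℚ_[p]) * (p:ℚ_[p]) + (q:ℚ_[p]) + (a:ℚ_[p])) q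
      = (((p+1).choose q : ℕ) : ℚ_[p]) *
        gbinom p ((m : ℚ_[p]) * (p:ℚ_[p]) + (N:ℚ_[p])) (p+1) := by
  have h2q : q + q = p + 1 := by omega
  have hNcast : (N : ℚ_[p]) = (a : ℚ_[p]) + (q : ℚ_[p]) := by rw [hN]; push_cast; ring
  have harg : (m : ℚ_[p]) * (p:ℚ_[p]) + (q:ℚ_[p]) + (a:ℚ_[p])
      = (m : ℚ_[p]) * (p:ℚ_[p]) + (N:ℚ_[p]) := by rw [hNcast]; ring
  rw [harg]
  have hprod : (∏ i ∈ Finset.range (p+1), ((m:ℚ_[p])*(p:ℚ_[p]) + (N:ℚ_[p]) - (i:ℚ_[p]))) =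
      (∏ i ∈ Finset.range q, ((m:ℚ_[p])*(p:ℚ_[p]) + (N:ℚ_[p]) - (i:ℚ_[p]))) *
        (∏ i ∈ Finset.range q, ((m:ℚ_[p])*(p:ℚ_[p]) + (a:ℚ_[p]) - (i:ℚ_[p]))) := by
    rw [← h2q, Finset.prod_range_add]
    congr 1
    apply Finset.prod_congr rfl
    intro i _
    rw [hNcast]
    push_cast
    ring
  have hfac : ((p+1).choose q) * (q.factorial * q.factorial) = (p+1).factorial := by
    have h := Nat.add_choose_mul_factorial_mul_factorial q q
    rw [h2q] at h
    rw [← h]; ring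
  unfold gbinom
  have hfq : (q.factorial : ℚ_[p]) ≠ 0 := Nat.cast_ne_zero.mpr q.factorial_ne_zero
  have hfp : ((p+1).factorial : ℚ_[p]) ≠ 0 := Nat.cast_ne_zero.mpr (p+1).factorial_ne_zero
  have hfaccast : ((p+1).factorial : ℚ_[p])
      = ((p+1).choose q : ℚ_[p]) * ((q.factorial : ℚ_[p]) * (q.factorial : ℚ_[p])) := by
    rw [← hfac]; push_cast; ring
  field_simp
  rw [hprod, hfaccast]
  ring

lemma gbinom_key2 (p : ℕ) [Fact p.Prime] (hp : 3 ≤ p) (m : ℤ_[p]) (N : ℕ)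
    (hNp : p + 1 ≤ N) (hNub : N ≤ 2*p - 1) :
    ‖gbinom p ((m : ℚ_[p]) * (p:ℚ_[p]) + (N:ℚ_[p])) (p+1)
      - (1 + (m:ℚ_[p])) * ((N.choose (p+1) : ℕ) : ℚ_[p])‖ ≤ ((p:ℝ))⁻¹ := by
  have hp' : p.Prime := Fact.out
  have hppos : (0:ℝ) < p := by exact_mod_cast hp'.pos
  have hm1 : ‖(m : ℚ_[p])‖ ≤ 1 := by
    rw [PadicInt.padic_norm_e_of_padicInt]; exact PadicInt.norm_le_one m
  have hm2 : ‖(1 + (m:ℚ_[p]))‖ ≤ 1 := by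
    have : (1 + (m:ℚ_[p])) = ((1 + m : ℤ_[p]) : ℚ_[p]) := by push_cast; ring
    rw [this, PadicInt.padic_norm_e_of_padicInt]; exact PadicInt.norm_le_one _
  set i₀ := N - p with hi0
  have hi0lt : i₀ < p + 1 := by omega
  have hi0mem : i₀ ∈ Finset.range (p+1) := Finset.mem_range.mpr hi0lt
  have hfacK : (p+1).factorial = ((p+1) * (p-1).factorial) * p := by
    have h1 : (p+1).factorial = (p+1) * p.factorial := Nat.factorial_succ p
    have h2 : p.factorial = p * (p-1).factorial := by
      conv_lhs => rw [show p = (p-1)+1 by omega]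
      rw [Nat.factorial_succ]
      congr 1
      omega
    rw [h1, h2]; ring
  have hKnd : ¬ p ∣ ((p+1) * (p-1).factorial) := by
    intro h
    rcases (Nat.Prime.dvd_mul hp').mp h with h | h
    · have h1 := Nat.dvd_sub h (dvd_refl p)
      simp at h1
      omega
    · exact absurd ((Nat.Prime.dvd_factorial hp').mp h) (by omega)
  have hfacnorm : ‖((p+1).factorial : ℚ_[p])‖ = (p:ℝ)⁻¹ := by
    rw [hfacK, Nat.cast_mul, norm_mul, padic_norm_nat_eq_one_of_not_dvd hKnd, one_mul,
      Padic.norm_p]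
  have hc : ((N.choose (p+1) : ℕ) : ℚ_[p])
      = (∏ i ∈ Finset.range (p+1), ((N:ℚ_[p]) - (i:ℚ_[p]))) / ((p+1).factorial : ℚ_[p]) := by
    have hdesc : N.descFactorial (p+1) = (p+1).factorial * N.choose (p+1) :=
      Nat.descFactorial_eq_factorial_mul_choose N (p+1)
    have hprodN : ((N.descFactorial (p+1) : ℕ) : ℚ_[p])
        = ∏ i ∈ Finset.range (p+1), ((N:ℚ_[p]) - (i:ℚ_[p])) := by
      rw [Nat.descFactorial_eq_prod_range, Nat.cast_prod]
      apply Finset.prod_congr rfl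
      intro i hi
      have hiN : i ≤ N := by have := Finset.mem_range.mp hi; omega
      rw [Nat.cast_sub hiN]
    rw [eq_div_iff (Nat.cast_ne_zero.mpr (p+1).factorial_ne_zero), ← hprodN, hdesc]
    push_cast; ring
  unfold gbinom
  rw [hc, ← mul_div_assoc, div_sub_div_same, norm_div, hfacnorm]
  rw [div_le_iff₀ (by positivity)]
  have hN0 : (N:ℚ_[p]) - (i₀:ℚ_[p]) = (p:ℚ_[p]) := by
    have h1 : ((N - i₀ : ℕ) : ℚ_[p]) = (N:ℚ_[p]) - (i₀:ℚ_[p]) := Nat.cast_sub (by omega)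
    have h2 : N - i₀ = p := by omega
    rw [← h1, h2]
  have hsplit1 := (Finset.mul_prod_erase (Finset.range (p+1))
    (fun i => (m:ℚ_[p])*(p:ℚ_[p]) + (N:ℚ_[p]) - (i:ℚ_[p])) hi0mem).symm
  have hsplit2 := (Finset.mul_prod_erase (Finset.range (p+1))
    (fun i => (N:ℚ_[p]) - (i:ℚ_[p])) hi0mem).symm
  beta_reduce at hsplit1 hsplit2
  set A := ∏ i ∈ (Finset.range (p+1)).erase i₀,
    ((m:ℚ_[p])*(p:ℚ_[p]) + (N:ℚ_[p]) - (i:ℚ_[p])) with hA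
  set B := ∏ i ∈ (Finset.range (p+1)).erase i₀, ((N:ℚ_[p]) - (i:ℚ_[p])) with hB
  have hD : (∏ i ∈ Finset.range (p+1), ((m:ℚ_[p])*(p:ℚ_[p]) + (N:ℚ_[p]) - (i:ℚ_[p])))
      - (1 + (m:ℚ_[p])) * ∏ i ∈ Finset.range (p+1), ((N:ℚ_[p]) - (i:ℚ_[p]))
      = (p:ℚ_[p]) * (1 + (m:ℚ_[p])) * (A - B) := by
    rw [hsplit1, hsplit2]
    rw [show (m:ℚ_[p])*(p:ℚ_[p]) + (N:ℚ_[p]) - (i₀:ℚ_[p])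
      = (m:ℚ_[p])*(p:ℚ_[p]) + ((N:ℚ_[p]) - (i₀:ℚ_[p])) by ring, hN0]
    ring
  have hAB : ‖A - B‖ ≤ (p:ℝ)⁻¹ := by
    apply padic_norm_prod_sub_prod _ _ _ (by positivity)
    · intro i hi
      have hiN : i ≤ N := by
        have := Finset.mem_range.mp (Finset.mem_of_mem_erase hi); omega
      have hgi : ‖(N:ℚ_[p]) - (i:ℚ_[p])‖ ≤ 1 := by
        rw [← Nat.cast_sub hiN]; exact padic_norm_nat_le_one _
      have : (m:ℚ_[p])*(p:ℚ_[p]) + (N:ℚ_[p]) - (i:ℚ_[p])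
          = (m:ℚ_[p])*(p:ℚ_[p]) + ((N:ℚ_[p]) - (i:ℚ_[p])) := by ring
      rw [this]
      refine le_trans (Padic.nonarchimedean _ _) (max_le ?_ hgi)
      rw [norm_mul, Padic.norm_p]
      calc ‖(m:ℚ_[p])‖ * (p:ℝ)⁻¹ ≤ 1 * (p:ℝ)⁻¹ := by
            apply mul_le_mul_of_nonneg_right hm1 (by positivity)
        _ ≤ 1 := by rw [one_mul]; apply inv_le_one_of_one_le₀; exact_mod_cast hp'.one_lt.le
    · intro i hi
      have hiN : i ≤ N := by
        have := Finset.mem_range.mp (Finset.mem_of_mem_erase hi); omega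
      rw [← Nat.cast_sub hiN]; exact padic_norm_nat_le_one _
    · intro i hi
      have : ((m:ℚ_[p])*(p:ℚ_[p]) + (N:ℚ_[p]) - (i:ℚ_[p])) - ((N:ℚ_[p]) - (i:ℚ_[p]))
          = (m:ℚ_[p])*(p:ℚ_[p]) := by ring
      rw [this, norm_mul, Padic.norm_p]
      calc ‖(m:ℚ_[p])‖ * (p:ℝ)⁻¹ ≤ 1 * (p:ℝ)⁻¹ :=
            mul_le_mul_of_nonneg_right hm1 (by positivity)
        _ = (p:ℝ)⁻¹ := one_mul _
  rw [hD, norm_mul, norm_mul, Padic.norm_p]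
  calc (p:ℝ)⁻¹ * ‖1 + (m:ℚ_[p])‖ * ‖A - B‖ ≤ (p:ℝ)⁻¹ * 1 * (p:ℝ)⁻¹ := by
        apply mul_le_mul _ hAB (norm_nonneg _) (by positivity)
        apply mul_le_mul_of_nonneg_left hm2 (by positivity)
    _ = (p:ℝ)⁻¹ * (p:ℝ)⁻¹ := by ring

theorem stmt19 (p : ℕ) [Fact p.Prime] (hp : 3 ≤ p)
    (a : ℕ) (ha : (p - 1) / 2 < a) (ha' : a ≤ p - 1) (m : ℤ_[p]) :
    ‖(gbinom p ((m : ℚ_[p]) * (p : ℚ_[p]) + (a : ℚ_[p])) ((p + 1) / 2) *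
        gbinom p ((m : ℚ_[p]) * (p : ℚ_[p]) + (((p + 1) / 2 : ℕ) : ℚ_[p]) + (a : ℚ_[p]))
          ((p + 1) / 2) -
      (-1 : ℚ_[p]) ^ ((p - 1) / 2) * 4 * (p : ℚ_[p]) * (1 + (m : ℚ_[p])) *
        (((a + (p + 1) / 2).choose (p + 1) : ℕ) : ℚ_[p])) / (p : ℚ_[p]) ^ 2‖ ≤ 1 := by
  have hp' : p.Prime := Fact.out
  have hodd : p % 2 = 1 := Nat.odd_iff.mp (hp'.odd_of_ne_two (by omega))
  have hppos : (0:ℝ) < p := by exact_mod_cast hp'.pos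
  set q := (p+1)/2 with hq
  have hq1 : (p-1)/2 = q - 1 := by omega
  have hq2 : 2 ≤ q := by omega
  set N := a + q with hN
  have hNp : p + 1 ≤ N := by omega
  have hNub : N ≤ 2*p - 1 := by omega
  rw [gbinom_key1 p hp a m q hq hodd N hN, hq1]
  -- the u for lemma B
  have hdvd : p ∣ p.choose (q-1) :=
    Nat.Prime.dvd_choose_self hp' (by omega) (by omega)
  set u := p.choose (q-1) / p with hu'
  have hu : p * u = p.choose (q-1) := Nat.mul_div_cancel' hdvd
  have hCp : (p+1).choose q = 2 * p.choose (q-1) := by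
    have h1 : (p+1).choose q = p.choose (q-1) + p.choose q := by
      rw [show q = (q-1)+1 by omega]
      exact Nat.choose_succ_succ p (q-1)
    have h2 : p.choose q = p.choose (q-1) := by
      rw [show q - 1 = p - q by omega]
      exact (Nat.choose_symm (by omega)).symm
    omega
  have hC : (((p+1).choose q : ℕ) : ℚ_[p]) = 2 * (u:ℚ_[p]) * (p:ℚ_[p]) := by
    rw [hCp, ← hu]; push_cast; ring
  have hA := gbinom_key2 p hp m N hNp hNub
  have hBint : (p:ℤ) ∣ (2 * u - 4 * (-1)^(q-1) : ℤ) := u_cong p hp hodd q hq u hu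
  have hB : ‖(2 * (u:ℚ_[p]) - 4 * (-1:ℚ_[p])^(q-1))‖ ≤ (p:ℝ)⁻¹ := by
    have h := (Padic.norm_int_le_pow_iff_dvd (2 * u - 4 * (-1)^(q-1) : ℤ) 1).mpr
      (by simpa using hBint)
    have hcast : (((2 * u - 4 * (-1)^(q-1) : ℤ)) : ℚ_[p])
        = 2 * (u:ℚ_[p]) - 4 * (-1:ℚ_[p])^(q-1) := by push_cast; ring
    rw [hcast] at h
    simpa using h
  have hm2 : ‖(1 + (m:ℚ_[p]))‖ ≤ 1 := by
    have : (1 + (m:ℚ_[p])) = ((1 + m : ℤ_[p]) : ℚ_[p]) := by push_cast; ring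
    rw [this, PadicInt.padic_norm_e_of_padicInt]; exact PadicInt.norm_le_one _
  set G := gbinom p ((m : ℚ_[p]) * (p:ℚ_[p]) + (N:ℚ_[p])) (p+1) with hG
  set c := ((N.choose (p+1) : ℕ) : ℚ_[p]) with hcdef
  have hX : (((p+1).choose q : ℕ) : ℚ_[p]) * G -
      (-1 : ℚ_[p]) ^ (q-1) * 4 * (p : ℚ_[p]) * (1 + (m : ℚ_[p])) * c
      = (p:ℚ_[p]) * ((2 * (u:ℚ_[p])) * (G - (1 + (m:ℚ_[p])) * c)
        + (2 * (u:ℚ_[p]) - 4 * (-1:ℚ_[p])^(q-1)) * ((1 + (m:ℚ_[p])) * c)) := by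
    rw [hC]; ring
  rw [hX, norm_div, norm_mul, norm_pow, Padic.norm_p]
  rw [div_le_one (by positivity)]
  calc (p:ℝ)⁻¹ * ‖(2 * (u:ℚ_[p])) * (G - (1 + (m:ℚ_[p])) * c)
        + (2 * (u:ℚ_[p]) - 4 * (-1:ℚ_[p])^(q-1)) * ((1 + (m:ℚ_[p])) * c)‖
      ≤ (p:ℝ)⁻¹ * (p:ℝ)⁻¹ := by
        apply mul_le_mul_of_nonneg_left _ (by positivity)
        refine le_trans (Padic.nonarchimedean _ _) (max_le ?_ ?_)
        · rw [norm_mul]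
          calc ‖(2 * (u:ℚ_[p]))‖ * ‖G - (1 + (m:ℚ_[p])) * c‖ ≤ 1 * (p:ℝ)⁻¹ := by
                apply mul_le_mul _ hA (norm_nonneg _) zero_le_one
                have : (2 * (u:ℚ_[p])) = ((2*u : ℕ) : ℚ_[p]) := by push_cast; ring
                rw [this]; exact padic_norm_nat_le_one _
            _ = (p:ℝ)⁻¹ := one_mul _
        · rw [norm_mul]
          calc ‖2 * (u:ℚ_[p]) - 4 * (-1:ℚ_[p])^(q-1)‖ * ‖(1 + (m:ℚ_[p])) * c‖
              ≤ (p:ℝ)⁻¹ * 1 := by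
                apply mul_le_mul hB _ (norm_nonneg _) (by positivity)
                rw [norm_mul]
                calc ‖1 + (m:ℚ_[p])‖ * ‖c‖ ≤ 1 * 1 := by
                      apply mul_le_mul hm2 (padic_norm_nat_le_one _)
                        (norm_nonneg _) zero_le_one
                  _ = 1 := one_mul 1
            _ = (p:ℝ)⁻¹ := mul_one _
    _ ≤ ((p:ℝ)⁻¹)^2 := by rw [sq]
end
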